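/- arXiv:1902.07871 — 4 statements merged into one kernel-verified Lean document; each statement's English description precedes it below -/
import Mathlib

section
/- Let μ be a Borel probability measure on Cantor space and suppose there is a constant r ∈ ℕ such that C(μ↾n) ≥ n − r for infinitely many n (i.e., μ is Kolmogorov random). Then μ is ML absolutely continuous. -/
open MeasureTheory Filter

/-- Cantor space: the space of infinite binary sequences. -/
abbrev Cantor : Type := ℕ → Bool

/-- Finite binary strings. -/
abbrev BStr : Type := List Bool

/-- The cylinder set of sequences extending the string `x`. -/
def cyl (x : BStr) : Set Cantor := {Z | ∀ i : Fin x.length, Z i.1 = x.get i}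

/-- The string of the first `n` bits of `Z`. -/
def seg (Z : Cantor) (n : ℕ) : BStr := List.ofFn fun i : Fin n => Z i.1

/-- `lam` is the uniform (fair-coin product) measure: every cylinder `[x]`
has measure `2^{-|x|}`. -/
def IsUniform (lam : Measure Cantor) : Prop :=
  ∀ x : BStr, lam (cyl x) = (2 : ENNReal)⁻¹ ^ x.length

/-- `(G_m)` is a Martin-Löf test with respect to the measure `ρ`:
the sets `G_m` are uniformly effectively open and `ρ (G_m) ≤ 2^{-m}`. -/
def IsMLTest (ρ : Measure Cantor) (G : ℕ → Set Cantor) : Prop :=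
  (∃ σ : ℕ → ℕ → BStr, Computable₂ σ ∧ ∀ m, G m = ⋃ i, cyl (σ m i)) ∧
  ∀ m, ρ (G m) ≤ (2 : ENNReal)⁻¹ ^ m

/-- `μ` is Martin-Löf absolutely continuous in `ρ`: `inf_m μ(G_m) = 0`
for every `ρ`-Martin-Löf test `(G_m)`. -/
def MLAC (μ ρ : Measure Cantor) : Prop :=
  ∀ G : ℕ → Set Cantor, IsMLTest ρ G → ⨅ m, μ (G m) = 0

/-- `Z` is Martin-Löf random with respect to `lam`. -/
def MLRandom (lam : Measure Cantor) (Z : Cantor) : Prop :=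
  ∀ G : ℕ → Set Cantor, IsMLTest lam G → Z ∉ ⋂ m, G m

/-- `ρ` is a computable measure: `ρ [x]` is a computable real, uniformly in `x`. -/
def ComputableMeasure (ρ : Measure Cantor) : Prop :=
  ∃ q : BStr → ℕ → ℚ, Computable₂ q ∧
    ∀ x k, |(q x k : ℝ) - (ρ (cyl x)).toReal| ≤ (2 : ℝ)⁻¹ ^ k

/-- `U` is a universal plain machine. -/
def UniversalPlain (U : BStr →. BStr) : Prop :=
  Partrec U ∧ ∀ M : BStr →. BStr, Partrec M →
    ∃ c : ℕ, ∀ p x, x ∈ M p → ∃ q : BStr, q.length ≤ p.length + c ∧ x ∈ U q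

/-- The domain of `M` is an antichain under the prefix relation. -/
def PrefixFreeDom (M : BStr →. BStr) : Prop :=
  ∀ p q : BStr, (M p).Dom → (M q).Dom → p <+: q → p = q

/-- `U` is a universal prefix-free machine. -/
def UniversalPrefixFree (U : BStr →. BStr) : Prop :=
  Partrec U ∧ PrefixFreeDom U ∧
  ∀ M : BStr →. BStr, Partrec M → PrefixFreeDom M →
    ∃ c : ℕ, ∀ p x, x ∈ M p → ∃ q : BStr, q.length ≤ p.length + c ∧ x ∈ U q

/-- Kolmogorov complexity of the string `x` with respect to the machine `U`:
the minimal length of a `U`-description of `x`. -/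
noncomputable def cpx (U : BStr →. BStr) (x : BStr) : ℕ :=
  sInf {n | ∃ q : BStr, q.length = n ∧ x ∈ U q}

/-- A natural number `n` identified with the string `0^n`. -/
def numStr (n : ℕ) : BStr := List.replicate n false

/-- Complexity of the natural number `n` (i.e., of the string `0^n`). -/
noncomputable def cpxN (U : BStr →. BStr) (n : ℕ) : ℕ := cpx U (numStr n)

/-- The `μ`-average complexity of the strings of length `n`:
`Σ_{|x|=n} cpx(x) · μ[x]`. -/
noncomputable def avgCpx (U : BStr →. BStr) (μ : Measure Cantor) (n : ℕ) : ℝ :=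
  ∑ v : Fin n → Bool, (cpx U (List.ofFn v) : ℝ) * (μ (cyl (List.ofFn v))).toReal

/-- A measure `μ` is trivial for the complexity given by the machine `U`
(e.g. K-trivial when `U` is the universal prefix-free machine, C-trivial
when `U` is the universal plain machine). -/
def MeasTrivial (U : BStr →. BStr) (μ : Measure Cantor) : Prop :=
  ∃ c : ℝ, ∀ n : ℕ, avgCpx U μ n ≤ (cpxN U n : ℝ) + c

def padB (k ℓ : ℕ) : BStr := (List.range ℓ).map fun j => k.testBit j

def valB (w : BStr) : ℕ := w.foldr (fun b a => b.toNat + 2 * a) 0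

@[simp] lemma padB_length (k ℓ : ℕ) : (padB k ℓ).length = ℓ := by simp [padB]

@[simp] lemma valB_nil : valB [] = 0 := rfl
@[simp] lemma valB_cons (b : Bool) (t : BStr) : valB (b :: t) = b.toNat + 2 * valB t := rfl

lemma padB_succ (k ℓ : ℕ) :
    padB k (ℓ+1) = (decide (k % 2 = 1)) :: padB (k/2) ℓ := by
  simp only [padB, List.range_succ_eq_map, List.map_cons, List.map_map]
  refine congrArg₂ _ (Nat.testBit_zero k) ?_
  exact List.map_congr_left fun j _ => Nat.testBit_succ k j

lemma valB_padB (k ℓ : ℕ) : valB (padB k ℓ) = k % 2 ^ ℓ := by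
  induction ℓ generalizing k with
  | zero => simp [padB, Nat.mod_one]
  | succ ℓ ih =>
    rw [padB_succ, valB_cons, ih]
    have h : (decide (k % 2 = 1)).toNat = k % 2 := by
      rcases Nat.mod_two_eq_zero_or_one k with h | h <;> simp [h]
    rw [h, pow_succ', Nat.mod_mul]

lemma padB_valB (w : BStr) : padB (valB w) w.length = w := by
  induction w with
  | nil => simp [padB]
  | cons b t ih =>
    rw [List.length_cons, padB_succ, valB_cons]
    have h1 : (b.toNat + 2 * valB t) % 2 = b.toNat := by
      cases b <;> simp [Nat.add_mul_mod_self_left]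
    have h2 : (b.toNat + 2 * valB t) / 2 = valB t := by
      cases b <;> omega
    rw [h1, h2, ih]
    cases b <;> simp

lemma valB_lt (w : BStr) : valB w < 2 ^ w.length := by
  induction w with
  | nil => simp
  | cons b t ih =>
    have : b.toNat ≤ 1 := Bool.toNat_le b
    simp only [valB_cons, List.length_cons, pow_succ]
    omega

/-- enumeration of length-`n` extensions of the strings `σ m i`. -/
def enum (σ : ℕ → ℕ → BStr) (m n i : ℕ) : Option BStr :=
  if (σ m i.unpair.1).length ≤ n then
    some (σ m i.unpair.1 ++ padB i.unpair.2 (n - (σ m i.unpair.1).length))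
  else none

def ins (acc : List BStr) (x : BStr) : List BStr := if x ∈ acc then acc else acc ++ [x]

/-- the list of distinct strings enumerated by `enum σ m n` in the first `j` steps. -/
def Dl (σ : ℕ → ℕ → BStr) (m n j : ℕ) : List BStr :=
  Nat.rec [] (fun y IH => (enum σ m n y).elim IH (ins IH)) j

lemma Dl_succ (σ m n j) :
    Dl σ m n (j+1) = (enum σ m n j).elim (Dl σ m n j) (ins (Dl σ m n j)) := rfl

lemma Dl_prefix_succ (σ m n j) : Dl σ m n j <+: Dl σ m n (j+1) := by
  rw [Dl_succ]
  cases enum σ m n j with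
  | none => exact List.prefix_refl _
  | some x =>
    simp only [Option.elim, ins]
    split
    · exact List.prefix_refl _
    · exact ⟨[x], rfl⟩

lemma Dl_prefix (σ m n) {j j'} (h : j ≤ j') : Dl σ m n j <+: Dl σ m n j' := by
  induction j' with
  | zero => simpa [Nat.le_zero.mp h]
  | succ j' ih =>
    rcases Nat.lt_or_ge j (j'+1) with h' | h'
    · exact (ih (Nat.lt_succ_iff.mp h')).trans (Dl_prefix_succ σ m n j')
    · have : j = j' + 1 := le_antisymm h h'
      simp [this]

lemma Dl_get?_mono (σ m n) {k : ℕ} {x : BStr} {j j'} (h : j ≤ j')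
    (hx : (Dl σ m n j)[k]? = some x) : (Dl σ m n j')[k]? = some x := by
  obtain ⟨t, ht⟩ := Dl_prefix σ m n h
  rw [← ht]
  rw [List.getElem?_eq_some_iff] at hx
  obtain ⟨hk, hget⟩ := hx
  rw [List.getElem?_append_left hk, List.getElem?_eq_some_iff]
  exact ⟨hk, hget⟩

lemma Dl_nodup (σ m n j) : (Dl σ m n j).Nodup := by
  induction j with
  | zero => exact List.nodup_nil
  | succ j ih =>
    rw [Dl_succ]
    cases enum σ m n j with
    | none => exact ih
    | some x =>
      simp only [Option.elim, ins]
      split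
      · exact ih
      · rename_i hmem
        simpa [List.nodup_append] using ⟨ih, fun a ha hax => hmem (hax ▸ ha)⟩

lemma mem_Dl (σ m n j x) (hx : x ∈ Dl σ m n j) : ∃ i, enum σ m n i = some x := by
  induction j with
  | zero => simp [Dl] at hx
  | succ j ih =>
    rw [Dl_succ] at hx
    cases he : enum σ m n j with
    | none => rw [he] at hx; exact ih hx
    | some y =>
      rw [he] at hx
      simp only [Option.elim, ins] at hx
      split at hx
      · exact ih hx
      · rcases List.mem_append.mp hx with h | h
        · exact ih h
        · exact ⟨j, by simp_all⟩

lemma enum_some {σ : ℕ → ℕ → BStr} {m n i x} (h : enum σ m n i = some x) :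
    x.length = n ∧ σ m i.unpair.1 <+: x := by
  unfold enum at h
  split at h
  · rename_i hle
    cases h
    constructor
    · simp [padB_length]; omega
    · exact ⟨_, rfl⟩
  · cases h

/-- coverage: every length `n` string extending some `σ m i` appears in some `Dl`. -/
lemma Dl_covers {σ : ℕ → ℕ → BStr} {m n : ℕ} {x : BStr} (hlen : x.length = n)
    {i : ℕ} (hpre : σ m i <+: x) : ∃ j, x ∈ Dl σ m n j := by
  set l := (σ m i).length with hl
  have hle : l ≤ n := hlen ▸ hpre.length_le
  set I := Nat.pair i (valB (x.drop l)) with hI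
  have he : enum σ m n I = some x := by
    unfold enum
    rw [hI, Nat.unpair_pair]
    simp only [← hl, hle, if_true]
    have hdl : (x.drop l).length = n - l := by rw [List.length_drop, hlen]
    rw [← hdl, padB_valB]
    congr 1
    obtain ⟨t, ht⟩ := hpre
    rw [← ht]; simp [hl]
  refine ⟨I + 1, ?_⟩
  rw [Dl_succ, he]
  simp only [Option.elim, ins]
  split
  · assumption
  · simp

/-- the machine built from σ. -/
def mach (σ : ℕ → ℕ → BStr) : BStr →. BStr := fun p =>
  Nat.rfindOpt fun j =>
    (Dl σ (2 ^ p.idxOf true)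
        (2 ^ p.idxOf true + (p.drop (p.idxOf true + 1)).length) j)[
      (valB (p.drop (p.idxOf true + 1)))]?

lemma parse_idxOf (s : ℕ) (w : BStr) :
    (List.replicate s false ++ true :: w).idxOf true = s := by
  induction s with
  | zero => simp [List.idxOf_cons]
  | succ s ih => simpa [List.replicate_succ, List.idxOf_cons] using ih

lemma parse_drop (s : ℕ) (w : BStr) :
    (List.replicate s false ++ true :: w).drop (s + 1) = w := by
  have : List.replicate s false ++ true :: w
      = (List.replicate s false ++ [true]) ++ w := by simp
  rw [this]
  have hlen : (List.replicate s false ++ [true]).length = s + 1 := by simp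
  rw [← hlen, List.drop_left]

/-- key property: if `x` has length `n ≥ 2^s`, extends some `σ (2^s) i`, and its stable
index is `k < 2^(n - 2^s)`, then `mach σ` outputs `x` on a short program. -/
lemma mach_mem {σ : ℕ → ℕ → BStr} {s n : ℕ} {x : BStr} (hlen : x.length = n)
    (hn : 2 ^ s ≤ n) {i : ℕ} (hpre : σ (2 ^ s) i <+: x)
    {j k : ℕ} (hget : (Dl σ (2 ^ s) n j)[k]? = some x) (hk : k < 2 ^ (n - 2 ^ s)) :
    ∃ p : BStr, p.length = s + 1 + (n - 2 ^ s) ∧ x ∈ mach σ p := by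
  set w := padB k (n - 2 ^ s) with hw
  refine ⟨List.replicate s false ++ true :: w, by simp [hw, padB_length]; omega, ?_⟩
  unfold mach
  rw [parse_idxOf, parse_drop]
  have hwlen : w.length = n - 2 ^ s := padB_length _ _
  have hvw : valB w = k := by
    rw [hw, valB_padB, Nat.mod_eq_of_lt hk]
  rw [hwlen, hvw]
  have hn' : 2 ^ s + (n - 2 ^ s) = n := by omega
  rw [hn']
  rw [Nat.rfindOpt_mono (fun {a m n'} h ha => Dl_get?_mono σ _ _ h ha)]
  exact ⟨j, hget⟩

open Primrec in 
lemma primrec_pow : Primrec₂ ((· ^ ·) : ℕ → ℕ → ℕ) :=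
  Primrec₂.unpaired.mp (Primrec.nat_iff.mpr Nat.Primrec.pow)

open Primrec in
lemma primrec_padB : Primrec₂ padB := by
  have htb : Primrec₂ (Nat.testBit : ℕ → ℕ → Bool) := by
    have : Primrec₂ (fun (x i : ℕ) => decide (x / 2 ^ i % 2 = 1)) :=
      (Primrec.eq.comp₂
        ((nat_mod.comp₂ ((nat_div.comp₂ Primrec₂.left
            (primrec_pow.comp₂ (Primrec₂.const 2) Primrec₂.right)))
          (Primrec₂.const 2))) (Primrec₂.const 1)).decide
    exact this.of_eq fun x i => (Nat.testBit_eq_decide_div_mod_eq).symm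
  have : Primrec₂ (fun (k ℓ : ℕ) => (List.range ℓ).map fun j => k.testBit j) :=
    Primrec₂.mk <| list_map (list_range.comp snd) ((htb.comp (fst.comp fst) snd).to₂)
  exact this.of_eq fun k ℓ => rfl

open Primrec in
lemma primrec_valB : Primrec valB := by
  have : Primrec (fun w : BStr => w.foldr (fun b a => (bif b then 1 else 0) + 2 * a) 0) :=
    list_foldr Primrec.id (const 0) <| .to₂ <|
      nat_add.comp (cond (fst.comp snd) (const 1) (const 0))
        (nat_mul.comp (const 2) (snd.comp snd))
  exact this.of_eq fun w => rfl

open Primrec in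
lemma primrec_ins : Primrec₂ ins := by
  have hmem : PrimrecPred (fun p : List BStr × BStr => p.2 ∈ p.1) := by
    have h1 : Primrec fun p : List BStr × BStr => decide (@List.idxOf BStr instBEqOfDecidableEq p.2 p.1 < p.1.length) :=
      (PrimrecRel.comp nat_lt (list_idxOf.comp snd fst) (list_length.comp fst)).decide
    exact ⟨inferInstance, h1.of_eq fun p => decide_eq_decide.mpr (by
      letI : BEq BStr := instBEqOfDecidableEq; exact List.idxOf_lt_length_iff)⟩
  exact Primrec₂.mk <| Primrec.ite hmem fst (list_concat.comp fst snd)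

open Primrec in
lemma primrec_drop : Primrec₂ (fun (n : ℕ) (l : BStr) => l.drop n) := by
  have h : Primrec (fun p : ℕ × BStr =>
      Nat.rec (motive := fun _ => BStr) p.2 (fun _ IH => IH.tail) p.1) :=
    nat_rec' fst snd (.to₂ <| list_tail.comp (snd.comp snd))
  refine Primrec₂.mk (h.of_eq fun p => ?_)
  obtain ⟨n, l⟩ := p
  induction n with
  | zero => rfl
  | succ n ih => simp only at ih ⊢; rw [ih, List.tail_drop]

open Computable in
lemma computable_enum {σ : ℕ → ℕ → BStr} (hσ : Computable₂ σ) :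
    Computable (fun a : (ℕ × ℕ) × ℕ => enum σ a.1.1 a.1.2 a.2) := by
  have hu1 : Computable (fun a : (ℕ × ℕ) × ℕ => a.2.unpair.1) :=
    Primrec.to_comp <| Primrec.fst.comp <| Primrec.unpair.comp Primrec.snd
  have hu2 : Computable (fun a : (ℕ × ℕ) × ℕ => a.2.unpair.2) :=
    Primrec.to_comp <| Primrec.snd.comp <| Primrec.unpair.comp Primrec.snd
  have hs : Computable (fun a : (ℕ × ℕ) × ℕ => σ a.1.1 a.2.unpair.1) :=
    hσ.comp (fst.comp fst) hu1
  have hslen : Computable (fun a : (ℕ × ℕ) × ℕ => (σ a.1.1 a.2.unpair.1).length) :=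
    Primrec.list_length.to_comp.comp hs
  have hn2 : Computable (fun a : (ℕ × ℕ) × ℕ => a.1.2) := snd.comp fst
  have hcond : Computable (fun a : (ℕ × ℕ) × ℕ =>
      decide ((σ a.1.1 a.2.unpair.1).length ≤ a.1.2)) :=
    Primrec.nat_le.decide.to_comp.comp hslen hn2
  have hpad : Computable (fun a : (ℕ × ℕ) × ℕ =>
      padB a.2.unpair.2 (a.1.2 - (σ a.1.1 a.2.unpair.1).length)) :=
    primrec_padB.to_comp.comp hu2 (Primrec.nat_sub.to_comp.comp hn2 hslen)
  have hval : Computable (fun a : (ℕ × ℕ) × ℕ =>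
      (some (σ a.1.1 a.2.unpair.1 ++
        padB a.2.unpair.2 (a.1.2 - (σ a.1.1 a.2.unpair.1).length)) : Option BStr)) :=
    Computable.option_some.comp (Primrec.list_append.to_comp.comp hs hpad)
  have h := Computable.cond hcond hval (Computable.const (Option.none : Option BStr))
  refine h.of_eq fun a => ?_
  by_cases hle : (σ a.1.1 a.2.unpair.1).length ≤ a.1.2 <;> simp [enum, hle]

attribute [irreducible] enum

open Computable in
lemma computable_Dl {σ : ℕ → ℕ → BStr} (hσ : Computable₂ σ) :
    Computable₂ (fun (mn : ℕ × ℕ) (j : ℕ) => Dl σ mn.1 mn.2 j) := by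
  have ho : Computable (fun q : ((ℕ × ℕ) × ℕ) × ℕ × List BStr =>
      enum σ q.1.1.1 q.1.1.2 q.2.1) :=
    ((computable_enum hσ).comp
      (Computable.pair (fst.comp fst) (fst.comp snd))).of_eq fun q => rfl
  have hinsc : Computable₂ (fun (q : ((ℕ × ℕ) × ℕ) × ℕ × List BStr) (x : BStr) =>
      ins q.2.2 x) :=
    primrec_ins.to_comp.comp (snd.comp <| snd.comp fst) snd
  have hstep : Computable₂ (fun (a : (ℕ × ℕ) × ℕ) (p : ℕ × List BStr) =>
      (enum σ a.1.1 a.1.2 p.1).elim p.2 (ins p.2)) := by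
    have := Computable.option_casesOn ho (snd.comp snd) hinsc
    refine Computable₂.mk (this.of_eq fun q => ?_)
    cases enum σ q.1.1.1 q.1.1.2 q.2.1 <;> rfl
  have h := Computable.nat_rec (snd : Computable fun a : (ℕ × ℕ) × ℕ => a.2)
    (Computable.const ([] : List BStr)) hstep
  exact Computable₂.mk (h.of_eq fun a => rfl)

open Computable in
lemma partrec_mach {σ : ℕ → ℕ → BStr} (hσ : Computable₂ σ) : Partrec (mach σ) := by
  have hidx : Computable (fun p : BStr => p.idxOf true) :=
    Primrec.list_idxOf.to_comp.comp (Computable.const true) Computable.id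
  have hw : Computable (fun p : BStr => p.drop (p.idxOf true + 1)) :=
    primrec_drop.to_comp.comp (Primrec.succ.to_comp.comp hidx) Computable.id
  have hm : Computable (fun p : BStr => 2 ^ p.idxOf true) :=
    primrec_pow.to_comp.comp (Computable.const 2) hidx
  have hn : Computable (fun p : BStr =>
      2 ^ p.idxOf true + (p.drop (p.idxOf true + 1)).length) :=
    Primrec.nat_add.to_comp.comp hm (Primrec.list_length.to_comp.comp hw)
  have hk : Computable (fun p : BStr => valB (p.drop (p.idxOf true + 1))) :=
    primrec_valB.to_comp.comp hw
  have hF : Computable₂ (fun (p : BStr) (j : ℕ) =>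
      (Dl σ (2 ^ p.idxOf true)
        (2 ^ p.idxOf true + (p.drop (p.idxOf true + 1)).length) j)[
        (valB (p.drop (p.idxOf true + 1)))]?) := by
    have hDl : Computable (fun q : BStr × ℕ =>
        Dl σ (2 ^ q.1.idxOf true)
          (2 ^ q.1.idxOf true + (q.1.drop (q.1.idxOf true + 1)).length) q.2) :=
      (computable_Dl hσ).comp (Computable.pair (hm.comp fst) (hn.comp fst)) snd
    exact Computable₂.mk <| Primrec.list_getElem?.to_comp.comp hDl (hk.comp fst)
  exact Partrec.rfindOpt hF

lemma measurable_cyl  (x : BStr) : MeasurableSet (cyl x) := by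
  have : cyl x = ⋂ i : Fin x.length, {Z : Cantor | Z i.1 = x.get i} := by
    ext Z; simp [cyl, Set.mem_iInter]
  rw [this]
  refine MeasurableSet.iInter fun i => ?_
  have : {Z : Cantor | Z i.1 = x.get i} = (fun Z : Cantor => Z i.1) ⁻¹' {x.get i} := rfl
  rw [this]
  exact (measurable_pi_apply i.1) (MeasurableSet.singleton (x.get i))

lemma mem_cyl_ofFn {n : ℕ} (v : Fin n → Bool) (Z : Cantor) :
    Z ∈ cyl (List.ofFn v) ↔ ∀ i : Fin n, Z i.1 = v i := by
  constructor
  · intro h i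
    have := h (Fin.cast (List.length_ofFn (f := v)).symm i)
    rw [List.get_ofFn, Fin.cast_cast, Fin.cast_eq_self] at this
    simpa using this
  · intro h i
    rw [List.get_ofFn]
    simpa using h (Fin.cast (List.length_ofFn (f := v)) i)

lemma cyl_mono {x y : BStr} (h : x <+: y) : cyl y ⊆ cyl x := by
  intro Z hZ i
  have hlt : i.1 < y.length := lt_of_lt_of_le i.2 h.length_le
  have := hZ ⟨i.1, hlt⟩
  rw [this]
  have := List.IsPrefix.getElem h i.2
  simp [List.get_eq_getElem, this]

lemma prefix_ofFn {x : BStr} {n : ℕ} (v : Fin n → Bool) (hle : x.length ≤ n)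
    (h : ∀ i : Fin x.length, v ⟨i.1, lt_of_lt_of_le i.2 hle⟩ = x.get i) :
    x <+: List.ofFn v := by
  rw [List.prefix_iff_eq_take]
  refine List.ext_get (by simp [hle]) fun i h1 h2 => ?_
  simp only [List.get_eq_getElem, List.getElem_take, List.getElem_ofFn]
  exact (h ⟨i, h1⟩).symm

lemma cyl_eq_biUnion {x : BStr} {n : ℕ} (h : x.length ≤ n) :
    cyl x = ⋃ v ∈ (Finset.univ.filter fun v : Fin n → Bool =>
      x <+: List.ofFn v), cyl (List.ofFn v) := by
  ext Z
  simp only [Set.mem_iUnion, Finset.mem_filter, Finset.mem_univ, true_and]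
  constructor
  · intro hZ
    refine ⟨fun i => Z i.1, ?_, ?_⟩
    · exact prefix_ofFn _ h fun i => by simpa using hZ i
    · exact (mem_cyl_ofFn _ Z).mpr fun i => rfl
  · rintro ⟨v, hpre, hmem⟩
    exact cyl_mono hpre hmem

lemma cyl_disjoint {n : ℕ} {v w : Fin n → Bool} (hvw : v ≠ w) :
    Disjoint (cyl (List.ofFn v)) (cyl (List.ofFn w)) := by
  rw [Set.disjoint_left]
  intro Z hv hw
  apply hvw
  funext i
  rw [← (mem_cyl_ofFn v Z).mp hv i, ← (mem_cyl_ofFn w Z).mp hw i]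

lemma iUnion_cyl_ofFn (n : ℕ) : ⋃ v : Fin n → Bool, cyl (List.ofFn v) = Set.univ := by
  ext Z
  simp only [Set.mem_iUnion, Set.mem_univ, iff_true]
  exact ⟨fun i => Z i.1, (mem_cyl_ofFn _ Z).mpr fun i => rfl⟩

lemma measure_biUnion_cyl (μ : Measure Cantor) {n : ℕ} (T : Finset (Fin n → Bool)) :
    μ (⋃ v ∈ T, cyl (List.ofFn v)) = ∑ v ∈ T, μ (cyl (List.ofFn v)) := by
  refine measure_biUnion_finset ?_ fun v _ => measurable_cyl _
  intro v _ w _ hvw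
  exact cyl_disjoint hvw

lemma sum_measure_cyl (μ : Measure Cantor) [IsProbabilityMeasure μ] (n : ℕ) :
    ∑ v : Fin n → Bool, μ (cyl (List.ofFn v)) = 1 := by
  rw [← measure_biUnion_cyl μ Finset.univ]
  have : ⋃ v ∈ (Finset.univ : Finset (Fin n → Bool)), cyl (List.ofFn v)
      = ⋃ v : Fin n → Bool, cyl (List.ofFn v) := by
    simp
  rw [this, iUnion_cyl_ofFn]
  exact measure_univ

section CpxLemmas

lemma cpx_le {U : BStr →. BStr} {x q : BStr} (h : x ∈ U q) : cpx U x ≤ q.length :=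
  Nat.sInf_le ⟨q, rfl, h⟩

lemma exists_cpx_id {U : BStr →. BStr} (hU : UniversalPlain U) :
    ∃ c' : ℕ, ∀ x : BStr, cpx U x ≤ x.length + c' := by
  have hid : Partrec (fun p : BStr => (Part.some p : Part BStr)) :=
    (Computable.id (α := BStr)).partrec.of_eq fun p => rfl
  obtain ⟨c', hc'⟩ := hU.2 (fun p => Part.some p) hid
  refine ⟨c', fun x => ?_⟩
  obtain ⟨q, hq, hxq⟩ := hc' x x (Part.mem_some x)
  exact le_trans (cpx_le hxq) hq

lemma eq_ofFn_of_length {y : BStr} {n : ℕ} (h : y.length = n) :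
    ∃ v : Fin n → Bool, List.ofFn v = y := by
  subst h; exact ⟨y.get, List.ofFn_get y⟩

open Classical in
lemma Dl_length_le (σ : ℕ → ℕ → BStr) (m n j : ℕ) :
    (Dl σ m n j).length ≤
      ((Finset.univ : Finset (Fin n → Bool)).filter
        (fun v => ∃ i, σ m i <+: List.ofFn v)).card := by
  classical
  rw [← List.toFinset_card_of_nodup (Dl_nodup σ m n j)]
  have himg : (Dl σ m n j).toFinset ⊆
      ((Finset.univ : Finset (Fin n → Bool)).filter
        (fun v => ∃ i, σ m i <+: List.ofFn v)).image List.ofFn := by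
    intro y hy
    rw [List.mem_toFinset] at hy
    obtain ⟨i, hi⟩ := mem_Dl σ m n j y hy
    obtain ⟨hylen, hypre⟩ := enum_some hi
    obtain ⟨v, hv⟩ := eq_ofFn_of_length hylen
    refine Finset.mem_image.mpr ⟨v, ?_, hv⟩
    simp only [Finset.mem_filter, Finset.mem_univ, true_and]
    exact ⟨_, hv ▸ hypre⟩
  exact (Finset.card_le_card himg).trans
    (le_of_eq (Finset.card_image_of_injective _ List.ofFn_injective))

lemma card_le_of_measure {lam : Measure Cantor} (hlam : IsUniform lam) {n m' : ℕ}
    (hmn : m' ≤ n) (S : Finset (Fin n → Bool)) {Gs : Set Cantor}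
    (hsub : (⋃ v ∈ S, cyl (List.ofFn v)) ⊆ Gs) (hG : lam Gs ≤ (2 : ENNReal)⁻¹ ^ m') :
    S.card ≤ 2 ^ (n - m') := by
  have h2n0 : ((2 : ENNReal) ^ n) ≠ 0 := by positivity
  have h2nt : ((2 : ENNReal) ^ n) ≠ ⊤ := by
    exact ENNReal.pow_ne_top (by norm_num)
  have h2m0 : ((2 : ENNReal) ^ m') ≠ 0 := by positivity
  have h2mt : ((2 : ENNReal) ^ m') ≠ ⊤ := ENNReal.pow_ne_top (by norm_num)
  have h1 : (S.card : ENNReal) * (2 : ENNReal)⁻¹ ^ n ≤ (2 : ENNReal)⁻¹ ^ m' := by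
    calc (S.card : ENNReal) * (2 : ENNReal)⁻¹ ^ n
        = ∑ _v ∈ S, (2 : ENNReal)⁻¹ ^ n := by rw [Finset.sum_const, nsmul_eq_mul]
      _ = ∑ v ∈ S, lam (cyl (List.ofFn v)) :=
          Finset.sum_congr rfl fun v _ => by rw [hlam, List.length_ofFn]
      _ = lam (⋃ v ∈ S, cyl (List.ofFn v)) := (measure_biUnion_cyl lam S).symm
      _ ≤ lam Gs := measure_mono hsub
      _ ≤ (2 : ENNReal)⁻¹ ^ m' := hG
  have h2 : (S.card : ENNReal) ≤ (2 : ENNReal) ^ (n - m') := by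
    calc (S.card : ENNReal) = (S.card : ENNReal) * (2 : ENNReal)⁻¹ ^ n * 2 ^ n := by
          rw [mul_assoc, ← ENNReal.inv_pow, ENNReal.inv_mul_cancel h2n0 h2nt, mul_one]
      _ ≤ (2 : ENNReal)⁻¹ ^ m' * 2 ^ n := mul_le_mul_left h1 _
      _ = (2 : ENNReal) ^ (n - m') := by
          rw [← ENNReal.inv_pow, show n = m' + (n - m') by omega, pow_add,
            ← mul_assoc, ENNReal.inv_mul_cancel h2m0 h2mt, one_mul]
          congr 1
          omega
  have h3 : (S.card : ENNReal) ≤ ((2 ^ (n - m') : ℕ) : ENNReal) := by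
    rwa [Nat.cast_pow, Nat.cast_ofNat]
  exact_mod_cast h3

end CpxLemmas
/-- If `μ` is a Kolmogorov random measure, i.e. there is a constant
`r` with `C(μ↾n) ≥ n - r` for infinitely many `n`, then `μ` is ML absolutely
continuous. -/
theorem kolmogorov_random_measure_is_MLAC
    (U : BStr →. BStr) (hU : UniversalPlain U)
    (lam : Measure Cantor) (hlam : IsUniform lam)
    (μ : Measure Cantor) [IsProbabilityMeasure μ]
    (r : ℕ) (hr : ∀ m : ℕ, ∃ n ≥ m, (n : ℝ) - (r : ℝ) ≤ avgCpx U μ n) :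
    MLAC μ lam := by  classical
  intro G hG
  obtain ⟨⟨σ, hσc, hGeq⟩, hbound⟩ := hG
  by_contra h0
  -- the infimum is a positive real
  have hεle : ∀ m', (⨅ m'', μ (G m'')) ≤ μ (G m') := fun m' => iInf_le _ m'
  set ε := ⨅ m', μ (G m') with hε
  have hG1 : ∀ m', μ (G m') ≤ 1 := fun m' =>
    (measure_mono (Set.subset_univ _)).trans_eq measure_univ
  have hεtop : ε ≠ ⊤ := by
    intro h
    have := (hεle 0).trans (hG1 0)
    rw [h] at this
    simp at this
  have hεr : 0 < ε.toReal := ENNReal.toReal_pos h0 hεtop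
  set εr := ε.toReal with hεrdef
  -- the machine and its constants
  obtain ⟨c, hc⟩ := hU.2 (mach σ) (partrec_mach hσc)
  obtain ⟨c', hc'⟩ := exists_cpx_id hU
  -- choice of parameters
  obtain ⟨a, ha⟩ := exists_nat_ge (2 * ((r : ℝ) + c' + 1) / εr + c)
  set s := a + 2 with hs
  set m := 2 ^ s with hm
  have hpow_nat : a + s + 1 ≤ m := by
    have h2 := (Nat.lt_two_pow_self : a < 2 ^ a)
    have h4 : m = 2 ^ a * 4 := by rw [hm, hs]; ring
    omega
  have hsD : (a : ℝ) ≤ (m : ℝ) - s - 1 := by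
    have : ((a : ℝ)) + s + 1 ≤ (m : ℝ) := by exact_mod_cast hpow_nat
    linarith
  -- finite approximation of G m
  set C : ℕ → Set Cantor := fun N => ⋃ i ∈ Finset.range (N + 1), cyl (σ m i) with hC
  have hCmono : Monotone C := by
    intro N N' hNN' Z hZ
    obtain ⟨i, hi, hZi⟩ := Set.mem_iUnion₂.mp hZ
    rw [Finset.mem_range] at hi
    exact Set.mem_biUnion (Finset.mem_range.mpr (by omega)) hZi
  have hCun : ⋃ N, C N = G m := by
    rw [hGeq m]
    apply Set.Subset.antisymm
    · refine Set.iUnion_subset fun N => Set.iUnion₂_subset fun i _ => ?_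
      intro Z hZ
      exact Set.mem_iUnion.mpr ⟨i, hZ⟩
    · refine Set.iUnion_subset fun i => ?_
      intro Z hZ
      exact Set.mem_iUnion.mpr ⟨i, Set.mem_biUnion (Finset.self_mem_range_succ i) hZ⟩
  have hsup : μ (G m) = ⨆ N, μ (C N) := by
    rw [← hCun]
    exact (hCmono.directed_le).measure_iUnion
  have hhalf : ε / 2 < ⨆ N, μ (C N) := by
    rw [← hsup]
    exact lt_of_lt_of_le (ENNReal.half_lt_self h0 hεtop) (hεle m)
  obtain ⟨N, hN⟩ := lt_iSup_iff.mp hhalf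
  -- choice of n
  set n₀ := (Finset.range (N + 1)).sup fun i => (σ m i).length with hn₀
  obtain ⟨n, hn, hAvg⟩ := hr (max n₀ m)
  have hmn : m ≤ n := le_trans (le_max_right _ _) hn
  have hn₀n : ∀ i, i ≤ N → (σ m i).length ≤ n := by
    intro i hi
    have h1 : (σ m i).length ≤ n₀ := by
      rw [hn₀]
      exact Finset.le_sup (f := fun i => (σ m i).length)
        (Finset.mem_range.mpr (Nat.lt_succ_of_le hi))
    exact h1.trans ((le_max_left n₀ m).trans hn)
  -- the covered strings of length n
  set T : Finset (Fin n → Bool) :=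
    Finset.univ.filter (fun v => ∃ i ≤ N, σ m i <+: List.ofFn v) with hT
  set S : Finset (Fin n → Bool) :=
    Finset.univ.filter (fun v => ∃ i, σ m i <+: List.ofFn v) with hS
  have hTS : T ⊆ S := by
    intro v hv
    simp only [hT, hS, Finset.mem_filter, Finset.mem_univ, true_and] at *
    obtain ⟨i, _, hp⟩ := hv
    exact ⟨i, hp⟩
  have hTun : ⋃ v ∈ T, cyl (List.ofFn v) = C N := by
    apply Set.Subset.antisymm
    · refine Set.iUnion₂_subset fun v hv => ?_
      rw [hT, Finset.mem_filter] at hv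
      obtain ⟨-, i, hiN, hpre⟩ := hv
      intro Z hZ
      exact Set.mem_biUnion (Finset.mem_range.mpr (Nat.lt_succ_of_le hiN)) (cyl_mono hpre hZ)
    · refine Set.iUnion₂_subset fun i hi => ?_
      rw [Finset.mem_range] at hi
      rw [cyl_eq_biUnion (hn₀n i (by omega))]
      refine Set.iUnion₂_subset fun v hv => ?_
      rw [Finset.mem_filter] at hv
      have hvT : v ∈ T := by
        rw [hT, Finset.mem_filter]
        exact ⟨Finset.mem_univ v, i, by omega, hv.2⟩
      intro Z hZ
      exact Set.mem_biUnion hvT hZ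
  have hSsub : (⋃ v ∈ S, cyl (List.ofFn v)) ⊆ G m := by
    refine Set.iUnion₂_subset fun v hv => ?_
    rw [hS, Finset.mem_filter] at hv
    obtain ⟨-, i, hpre⟩ := hv
    refine (cyl_mono hpre).trans ?_
    rw [hGeq m]
    intro Z hZ
    exact Set.mem_iUnion.mpr ⟨i, hZ⟩
  -- counting bound
  have hScard : S.card ≤ 2 ^ (n - m) :=
    card_le_of_measure hlam hmn S hSsub (hbound m)
  -- complexity bounds
  have hcpxS : ∀ v ∈ S, cpx U (List.ofFn v) ≤ s + 1 + (n - m) + c := by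
    intro v hv
    rw [hS, Finset.mem_filter] at hv
    obtain ⟨-, i, hpre⟩ := hv
    have hlen : (List.ofFn v).length = n := List.length_ofFn
    obtain ⟨j, hj⟩ := Dl_covers (σ := σ) hlen hpre
    obtain ⟨k, hk⟩ := List.getElem?_of_mem hj
    have hklt : k < (Dl σ m n j).length := (List.getElem?_eq_some_iff.mp hk).1
    have hk2 : k < 2 ^ (n - m) :=
      lt_of_lt_of_le hklt ((Dl_length_le σ m n j).trans hScard)
    obtain ⟨p, hplen, hpmem⟩ := mach_mem hlen hmn hpre hk hk2
    obtain ⟨q, hqlen, hqmem⟩ := hc p _ hpmem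
    calc cpx U (List.ofFn v) ≤ q.length := cpx_le hqmem
      _ ≤ p.length + c := hqlen
      _ = s + 1 + (n - m) + c := by rw [hplen]
  have hcpxAll : ∀ v : Fin n → Bool, cpx U (List.ofFn v) ≤ n + c' := fun v => by
    have := hc' (List.ofFn v)
    rwa [List.length_ofFn] at this
  -- real-valued weights
  set w : (Fin n → Bool) → ℝ := fun v => (μ (cyl (List.ofFn v))).toReal with hwdef
  have hw0 : ∀ v, 0 ≤ w v := fun v => ENNReal.toReal_nonneg
  have htot : ∑ v : Fin n → Bool, w v = 1 := by
    rw [hwdef, ← ENNReal.toReal_sum (fun v _ => measure_ne_top μ _), sum_measure_cyl μ n,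
      ENNReal.toReal_one]
  have hwT : εr / 2 ≤ ∑ v ∈ T, w v := by
    have h1 : μ (C N) = ∑ v ∈ T, μ (cyl (List.ofFn v)) := by
      rw [← hTun, measure_biUnion_cyl]
    have h2 : (ε / 2).toReal ≤ (μ (C N)).toReal :=
      ENNReal.toReal_mono (measure_ne_top μ _) hN.le
    rw [h1, ENNReal.toReal_sum (fun v _ => measure_ne_top μ _)] at h2
    calc εr / 2 = (ε / 2).toReal := by
          rw [ENNReal.toReal_div]
          norm_num
          exact hεrdef
      _ ≤ ∑ v ∈ T, w v := h2
  -- splitting the average complexity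
  have havg_eq : avgCpx U μ n = ∑ v ∈ Finset.univ \ T, (cpx U (List.ofFn v) : ℝ) * w v
      + ∑ v ∈ T, (cpx U (List.ofFn v) : ℝ) * w v := by
    rw [Finset.sum_sdiff (Finset.subset_univ T)]
    rfl
  have hb1 : ∑ v ∈ T, (cpx U (List.ofFn v) : ℝ) * w v
      ≤ ((s + 1 + (n - m) + c : ℕ) : ℝ) * ∑ v ∈ T, w v := by
    rw [Finset.mul_sum]
    refine Finset.sum_le_sum fun v hv => mul_le_mul_of_nonneg_right ?_ (hw0 v)
    exact_mod_cast hcpxS v (hTS hv)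
  have hb2 : ∑ v ∈ Finset.univ \ T, (cpx U (List.ofFn v) : ℝ) * w v
      ≤ ((n + c' : ℕ) : ℝ) * ∑ v ∈ Finset.univ \ T, w v := by
    rw [Finset.mul_sum]
    refine Finset.sum_le_sum fun v hv => mul_le_mul_of_nonneg_right ?_ (hw0 v)
    exact_mod_cast hcpxAll v
  have hrest : ∑ v ∈ Finset.univ \ T, w v = 1 - ∑ v ∈ T, w v := by
    have h := Finset.sum_sdiff (f := w) (Finset.subset_univ T)
    rw [htot] at h
    linarith
  set wT := ∑ v ∈ T, w v with hwTdef
  set A : ℝ := ((s + 1 + (n - m) + c : ℕ) : ℝ) with hAdef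
  set B : ℝ := ((n + c' : ℕ) : ℝ) with hBdef
  have hA : A = (s : ℝ) + 1 + ((n : ℝ) - m) + c := by
    rw [hAdef]
    push_cast [Nat.cast_sub hmn]
    ring
  have hB : B = (n : ℝ) + c' := by rw [hBdef]; push_cast; ring
  have hDge : (r : ℝ) + c' + 1 ≤ (εr / 2) * (B - A) := by
    have hBA : B - A = (m : ℝ) - s - 1 + c' - c := by rw [hA, hB]; ring
    have h3 : 2 * ((r : ℝ) + c' + 1) / εr ≤ B - A := by
      rw [hBA]
      have hc'0 : (0 : ℝ) ≤ c' := Nat.cast_nonneg c'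
      linarith [ha, hsD]
    have h4 : (εr / 2) * (2 * ((r : ℝ) + c' + 1) / εr) = (r : ℝ) + c' + 1 := by
      field_simp
    calc (r : ℝ) + c' + 1 = (εr / 2) * (2 * ((r : ℝ) + c' + 1) / εr) := h4.symm
      _ ≤ (εr / 2) * (B - A) := mul_le_mul_of_nonneg_left h3 (by linarith)
  have hBA0 : 0 ≤ B - A := by nlinarith [hDge, hεr, (Nat.cast_nonneg r : (0:ℝ) ≤ r), (Nat.cast_nonneg c' : (0:ℝ) ≤ c')]
  have h5 : (εr / 2) * (B - A) ≤ wT * (B - A) := mul_le_mul_of_nonneg_right hwT hBA0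
  have hchain : avgCpx U μ n ≤ B - wT * (B - A) := by
    have hkey : A * wT + B * (1 - wT) = B - wT * (B - A) := by ring
    rw [havg_eq]
    rw [hrest] at hb2
    linarith [hb1, hb2]
  have hfinal : (n : ℝ) - r ≤ B - wT * (B - A) := le_trans hAvg hchain
  rw [hB] at hfinal
  linarith [hfinal, h5, hDge]
end

section
/- Every finite convex combination of ML absolutely continuous probability measures is ML absolutely continuous. Moreover, an ML absolutely continuous measure μ is an extreme point of the set of ML absolutely continuous measures (i.e., μ cannot be written as α·μ₁ + (1−α)·μ₂ with 0 < α < 1 and μ₁ ≠ μ₂ both ML absolutely continuous) if and only if μ = δ_Z for some Martin-Löf random Z ∈ 2^ℕ, where δ_Z is the Dirac measure concentrated on {Z}. -/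
open MeasureTheory Filter

lemma seg_length (Z : Cantor) (n : ℕ) : (seg Z n).length = n := by simp [seg]

lemma seg_get (Z : Cantor) (n : ℕ) (i : Fin (seg Z n).length) :
    (seg Z n).get i = Z i.1 := by
  simp [seg]
  exact List.get_ofFn _ _

lemma mem_cyl_seg (Z : Cantor) (n : ℕ) : Z ∈ cyl (seg Z n) := by
  intro i; rw [seg_get]

lemma iInter_cyl_seg (Z : Cantor) : (⋂ n, cyl (seg Z n)) = {Z} := by
  ext Y
  simp only [Set.mem_iInter, Set.mem_singleton_iff]
  constructor
  · intro h
    funext n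
    have h2 := h (n+1) ⟨n, by simp [seg_length]⟩
    rw [seg_get] at h2
    exact h2
  · rintro rfl n
    exact mem_cyl_seg Y n

lemma measurable_of_test {ρ : Measure Cantor} {G : ℕ → Set Cantor}
    (hG : IsMLTest ρ G) (m : ℕ) : MeasurableSet (G m) := by
  obtain ⟨⟨σ, _, hσ⟩, _⟩ := hG
  rw [hσ m]
  exact MeasurableSet.iUnion fun i => measurable_cyl _

lemma prob_eq_dirac (μ : Measure Cantor) [IsProbabilityMeasure μ] (Z : Cantor)
    (h : ∀ n, μ (cyl (seg Z n)) = 1) : μ = Measure.dirac Z := by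
  have hcompl : μ ({Z}ᶜ) = 0 := by
    have h1 : ({Z}ᶜ : Set Cantor) = ⋃ n, (cyl (seg Z n))ᶜ := by
      rw [← Set.compl_iInter, iInter_cyl_seg]
    rw [h1]
    refine le_antisymm ?_ (zero_le)
    refine le_trans (measure_iUnion_le _) ?_
    have : ∀ n, μ ((cyl (seg Z n))ᶜ) = 0 := fun n => by
      rw [measure_compl (measurable_cyl _) (measure_ne_top μ _), h n,
        measure_univ, tsub_self]
    simp [this]
  refine Measure.ext fun s hs => ?_
  rw [Measure.dirac_apply' _ hs]
  by_cases hZ : Z ∈ s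
  · have h1 : μ (sᶜ) = 0 := by
      refine le_antisymm (le_trans (measure_mono ?_) hcompl.le) (zero_le)
      intro y hy
      simp only [Set.mem_compl_iff, Set.mem_singleton_iff] at *
      intro hyz; exact hy (hyz ▸ hZ)
    have h2 : μ s = 1 := (prob_compl_eq_zero_iff hs).mp h1
    rw [h2, Set.indicator_of_mem hZ]; rfl
  · have h1 : μ s = 0 := by
      refine le_antisymm (le_trans (measure_mono ?_) hcompl.le) (zero_le)
      intro y hy
      simp only [Set.mem_compl_iff, Set.mem_singleton_iff]
      rintro rfl; exact hZ hy
    rw [h1, Set.indicator_of_notMem hZ]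

lemma seg_succ (Z : Cantor) (n : ℕ) : seg Z (n+1) = seg Z n ++ [Z n] := by
  simp only [seg, List.ofFn_succ', List.concat_eq_append, Fin.coe_castSucc, Fin.val_last]

lemma mem_cyl_iff_seg (x : BStr) (Z : Cantor) : Z ∈ cyl x ↔ seg Z x.length = x := by
  constructor
  · intro h
    apply List.ext_get (by simp [seg_length])
    intro n h1 h2
    have := h ⟨n, h2⟩
    simpa [seg] using this
  · intro h i
    have h3 := List.get_of_eq h ⟨i.1, by simpa [seg_length] using i.2⟩
    rw [seg_get] at h3
    simpa using h3

lemma mem_cyl_append (x : BStr) (b : Bool) (Z : Cantor) :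
    Z ∈ cyl (x ++ [b]) ↔ Z ∈ cyl x ∧ Z x.length = b := by
  rw [mem_cyl_iff_seg, mem_cyl_iff_seg]
  have hl : (x ++ [b]).length = x.length + 1 := by simp
  rw [hl, seg_succ]
  constructor
  · intro h
    obtain ⟨h1, h2⟩ := List.append_inj h (by simp [seg_length])
    exact ⟨h1, by simpa using h2⟩
  · rintro ⟨h1, h2⟩
    rw [h1, h2]

lemma cyl_union (x : BStr) : cyl x = cyl (x ++ [false]) ∪ cyl (x ++ [true]) := by
  ext Z
  simp only [Set.mem_union, mem_cyl_append]
  rcases Bool.eq_false_or_eq_true (Z x.length) with h | h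
  · constructor
    · intro hx; exact Or.inr ⟨hx, h⟩
    · rintro (⟨hx, _⟩ | ⟨hx, _⟩) <;> exact hx
  · constructor
    · intro hx; exact Or.inl ⟨hx, h⟩
    · rintro (⟨hx, _⟩ | ⟨hx, _⟩) <;> exact hx

lemma measure_cyl_split (μ : Measure Cantor) (x : BStr) :
    μ (cyl x) = μ (cyl (x ++ [false])) + μ (cyl (x ++ [true])) := by
  rw [cyl_union x]
  refine measure_union ?_ (measurable_cyl _)
  rw [Set.disjoint_iff]
  rintro Z ⟨h1, h2⟩
  rw [mem_cyl_append] at h1 h2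
  rw [h1.2] at h2
  exact absurd h2.2 (by simp)

noncomputable def chain (μ : Measure Cantor) : ℕ → BStr
  | 0 => []
  | n+1 => chain μ n ++ [if μ (cyl (chain μ n ++ [true])) = 1 then true else false]

lemma cyl_nil : cyl ([] : BStr) = Set.univ := by
  ext Z; simp [cyl]

lemma chain_measure (μ : Measure Cantor) [IsProbabilityMeasure μ]
    (h01 : ∀ x : BStr, μ (cyl x) = 0 ∨ μ (cyl x) = 1) (n : ℕ) :
    μ (cyl (chain μ n)) = 1 := by
  induction n with
  | zero => simp [chain, cyl_nil]
  | succ n ih =>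
    by_cases ht : μ (cyl (chain μ n ++ [true])) = 1
    · simp [chain, ht]
    · have hf : μ (cyl (chain μ n ++ [true])) = 0 := (h01 _).resolve_right ht
      have := measure_cyl_split μ (chain μ n)
      rw [ih, hf, add_zero] at this
      simp [chain, ht, ← this]

/-- The sequence determined by a 0-1-valued measure. -/
noncomputable def zseq (μ : Measure Cantor) : Cantor :=
  fun n => if μ (cyl (chain μ n ++ [true])) = 1 then true else false

lemma seg_zseq (μ : Measure Cantor) (n : ℕ) : seg (zseq μ) n = chain μ n := by
  induction n with
  | zero => simp [seg, chain]
  | succ n ih => rw [seg_succ, ih]; rfl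

lemma mlac_smul_restrict {lam μ : Measure Cantor} (hμ : MLAC μ lam)
    {C : Set Cantor} (hC : μ C ≠ 0) (hCt : μ C ≠ ⊤) :
    MLAC ((μ C)⁻¹ • μ.restrict C) lam := by
  intro G hG
  have h0 := hμ G hG
  refine le_antisymm ?_ (zero_le)
  have hle : ∀ m, ((μ C)⁻¹ • μ.restrict C) (G m) ≤ (μ C)⁻¹ * μ (G m) := by
    intro m
    rw [Measure.smul_apply, smul_eq_mul]
    exact mul_le_mul_right (Measure.restrict_le_self _) _
  calc ⨅ m, ((μ C)⁻¹ • μ.restrict C) (G m) ≤ ⨅ m, (μ C)⁻¹ * μ (G m) :=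
        le_iInf fun m => (iInf_le _ m).trans (hle m)
    _ = (μ C)⁻¹ * ⨅ m, μ (G m) :=
        (ENNReal.mul_iInf_of_ne (by simpa using hCt) (by
          simpa [ENNReal.inv_ne_top] using hC)).symm
    _ = 0 := by rw [h0, mul_zero]

lemma nested_test {lam : Measure Cantor}
    {G : ℕ → Set Cantor} (hG : IsMLTest lam G) :
    ∃ H : ℕ → Set Cantor, IsMLTest lam H ∧ Antitone H ∧ ∀ m, G (m+1) ⊆ H m := by
  obtain ⟨⟨σ, hσc, hσ⟩, hbd⟩ := hG
  refine ⟨fun m => ⋃ k, G (m + 1 + k), ⟨⟨fun m i => σ (m + 1 + (Nat.unpair i).1) (Nat.unpair i).2,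
      ?_, ?_⟩, ?_⟩, ?_, ?_⟩
  · have h1 : Primrec fun p : ℕ × ℕ => p.1 + 1 + (Nat.unpair p.2).1 :=
      Primrec.nat_add.comp (Primrec.succ.comp Primrec.fst)
        (Primrec.fst.comp (Primrec.unpair.comp Primrec.snd))
    have h2 : Primrec fun p : ℕ × ℕ => (Nat.unpair p.2).2 :=
      Primrec.snd.comp (Primrec.unpair.comp Primrec.snd)
    exact hσc.comp h1.to_comp h2.to_comp
  · intro m
    ext Z
    simp only [Set.mem_iUnion]
    constructor
    · rintro ⟨k, hk⟩
      rw [hσ] at hk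
      obtain ⟨i, hi⟩ := Set.mem_iUnion.mp hk
      exact ⟨Nat.pair k i, by simpa [Nat.unpair_pair] using hi⟩
    · rintro ⟨i, hi⟩
      refine ⟨(Nat.unpair i).1, ?_⟩
      rw [hσ]
      exact Set.mem_iUnion.mpr ⟨(Nat.unpair i).2, hi⟩
  · intro m
    calc lam (⋃ k, G (m + 1 + k)) ≤ ∑' k, lam (G (m + 1 + k)) := measure_iUnion_le _
      _ ≤ ∑' k : ℕ, (2 : ENNReal)⁻¹ ^ (m + 1 + k) := ENNReal.tsum_le_tsum fun k => hbd _
      _ = (2 : ENNReal)⁻¹ ^ (m + 1) * ∑' k : ℕ, (2 : ENNReal)⁻¹ ^ k := by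
          rw [← ENNReal.tsum_mul_left]
          exact tsum_congr fun k => pow_add _ _ _
      _ = (2 : ENNReal)⁻¹ ^ m := by
          rw [ENNReal.tsum_geometric, pow_succ]
          have h2 : (1 : ENNReal) - 2⁻¹ = 2⁻¹ := by
            rw [ENNReal.sub_eq_of_eq_add (by simp)]
            rw [← two_mul, ENNReal.mul_inv_cancel (by norm_num) (by norm_num)]
          rw [h2, inv_inv, mul_assoc,
            ENNReal.inv_mul_cancel (by norm_num) (by norm_num), mul_one]
  · intro m n hmn
    refine Set.iUnion_subset fun k => ?_
    have : n + 1 + k = m + 1 + (n - m + k) := by omega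
    rw [this]
    exact Set.subset_iUnion (fun k => G (m + 1 + k)) _
  · intro m
    have : G (m + 1) = G (m + 1 + 0) := by rw [Nat.add_zero]
    rw [this]
    exact Set.subset_iUnion (fun k => G (m + 1 + k)) 0

lemma mlac_convex (lam : Measure Cantor) (k : ℕ) (μs : Fin k → Measure Cantor)
    (w : Fin k → ENNReal) (hmlac : ∀ i, MLAC (μs i) lam) (hw : (∑ i, w i) = 1) :
    MLAC (∑ i, w i • μs i) lam := by
  intro G hG
  obtain ⟨H, hH, hanti, hsub⟩ := nested_test hG
  have happ : ∀ K : Set Cantor, (∑ i, w i • μs i) K = ∑ i, w i * μs i K := by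
    intro K
    rw [Measure.finset_sum_apply]
    simp [Measure.smul_apply]
  have hwne : ∀ i, w i ≠ ⊤ := by
    intro i h
    have h1 : w i ≤ ∑ j, w j := Finset.single_le_sum (fun j _ => zero_le) (Finset.mem_univ i)
    rw [hw, h] at h1
    exact absurd h1 (by simp)
  refine le_antisymm ?_ (zero_le)
  have key : (⨅ m, ∑ i, w i * μs i (H m)) = 0 := by
    rw [ENNReal.iInf_sum (f := fun m (i : Fin k) => w i * μs i (H m)) (s := Finset.univ)
      (fun t i j => ⟨max i j, fun a _ =>
      ⟨mul_le_mul_right (measure_mono (hanti (le_max_left i j))) _,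
       mul_le_mul_right (measure_mono (hanti (le_max_right i j))) _⟩⟩)]
    refine Finset.sum_eq_zero fun i _ => ?_
    rw [← ENNReal.mul_iInf (fun h => absurd h (hwne i)), hmlac i H hH, mul_zero]
  calc ⨅ m, (∑ i, w i • μs i) (G m)
      ≤ ⨅ m, (∑ i, w i • μs i) (H m) :=
        le_iInf fun m => (iInf_le _ (m+1)).trans (measure_mono (hsub m))
    _ = ⨅ m, ∑ i, w i * μs i (H m) := by simp only [happ]
    _ = 0 := key

/-- the ML absolutely continuous probability measures are closed
under finite convex combinations, and an ML absolutely continuous measure is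
an extreme point of the set of ML absolutely continuous measures iff it is a
Dirac measure `δ_Z` for a Martin-Löf random `Z`. -/
theorem MLAC_convex_and_extreme_points
    (lam : Measure Cantor) (hlam : IsUniform lam) :
    (∀ (k : ℕ) (μs : Fin k → Measure Cantor) (w : Fin k → ENNReal),
      (∀ i, IsProbabilityMeasure (μs i)) → (∀ i, MLAC (μs i) lam) →
      (∑ i, w i) = 1 → MLAC (∑ i, w i • μs i) lam) ∧
    (∀ μ : Measure Cantor, IsProbabilityMeasure μ → MLAC μ lam →
      ((¬ ∃ (α : ENNReal) (μ₁ μ₂ : Measure Cantor), 0 < α ∧ α < 1 ∧ μ₁ ≠ μ₂ ∧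
          IsProbabilityMeasure μ₁ ∧ IsProbabilityMeasure μ₂ ∧
          MLAC μ₁ lam ∧ MLAC μ₂ lam ∧ μ = α • μ₁ + (1 - α) • μ₂) ↔
        (∃ Z : Cantor, MLRandom lam Z ∧ μ = Measure.dirac Z))) := by
  constructor
  · intro k μs w _ hmlac hw
    exact mlac_convex lam k μs w hmlac hw
  · intro μ hprob hmlac
    constructor
    · intro hext
      by_cases h01 : ∀ x : BStr, μ (cyl x) = 0 ∨ μ (cyl x) = 1
      · have hdirac : μ = Measure.dirac (zseq μ) :=
          prob_eq_dirac μ _ fun n => by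
            rw [seg_zseq]; exact chain_measure μ h01 n
        refine ⟨zseq μ, ?_, hdirac⟩
        intro G hG hmem
        have h1 : ∀ m, μ (G m) = 1 := by
          intro m
          rw [hdirac, Measure.dirac_apply' _ (measurable_of_test hG m),
            Set.indicator_of_mem (Set.mem_iInter.mp hmem m)]
          rfl
        have h2 := hmlac G hG
        simp only [h1, iInf_const] at h2
        exact one_ne_zero h2
      · exfalso
        apply hext
        push_neg at h01
        obtain ⟨x, hx0, hx1⟩ := h01
        set C := cyl x with hC
        have hCm : MeasurableSet C := measurable_cyl x
        have hCt : μ C ≠ ⊤ := measure_ne_top μ C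
        have hCle : μ C ≤ 1 := prob_le_one
        have hClt : μ C < 1 := lt_of_le_of_ne hCle hx1
        have hcompl : μ Cᶜ = 1 - μ C := by
          rw [measure_compl hCm hCt, measure_univ]
        have hcompl0 : μ Cᶜ ≠ 0 := by
          rw [hcompl]
          exact (tsub_pos_of_lt hClt).ne'
        have hcomplt : μ Cᶜ ≠ ⊤ := measure_ne_top μ _
        refine ⟨μ C, (μ C)⁻¹ • μ.restrict C, (μ Cᶜ)⁻¹ • μ.restrict Cᶜ,
          pos_iff_ne_zero.mpr hx0, hClt, ?_, ?_, ?_,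
          mlac_smul_restrict hmlac hx0 hCt,
          mlac_smul_restrict hmlac hcompl0 hcomplt, ?_⟩
        · intro heq
          have h1 : ((μ C)⁻¹ • μ.restrict C) C = 1 := by
            rw [Measure.smul_apply, Measure.restrict_apply hCm, Set.inter_self,
              smul_eq_mul, ENNReal.inv_mul_cancel hx0 hCt]
          have h2 : ((μ Cᶜ)⁻¹ • μ.restrict Cᶜ) C = 0 := by
            rw [Measure.smul_apply, Measure.restrict_apply hCm, Set.inter_compl_self,
              measure_empty, smul_eq_mul, mul_zero]
          rw [heq, h2] at h1
          exact one_ne_zero h1.symm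
        · exact ⟨by rw [Measure.smul_apply, Measure.restrict_apply_univ, smul_eq_mul,
            ENNReal.inv_mul_cancel hx0 hCt]⟩
        · exact ⟨by rw [Measure.smul_apply, Measure.restrict_apply_univ, smul_eq_mul,
            ENNReal.inv_mul_cancel hcompl0 hcomplt]⟩
        · rw [smul_smul, ENNReal.mul_inv_cancel hx0 hCt, one_smul, ← hcompl,
            smul_smul, ENNReal.mul_inv_cancel hcompl0 hcomplt, one_smul,
            Measure.restrict_add_restrict_compl hCm]
    · rintro ⟨Z, hZrand, rfl⟩
      rintro ⟨α, μ₁, μ₂, hα0, hα1, hne, hp1, hp2, _, _, heq⟩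
      have hα1' : (1 : ENNReal) - α ≠ 0 := (tsub_pos_of_lt hα1).ne'
      have key : ∀ (ν : Measure Cantor), IsProbabilityMeasure ν →
          (∀ n, ν (cyl (seg Z n)) = 1) → ν = Measure.dirac Z := fun ν hν h =>
        prob_eq_dirac ν Z h
      have hcyl1 : ∀ n, μ₁ (cyl (seg Z n)) = 1 ∧ μ₂ (cyl (seg Z n)) = 1 := by
        intro n
        have hms : MeasurableSet (cyl (seg Z n))ᶜ := (measurable_cyl _).compl
        have h0 : Measure.dirac Z ((cyl (seg Z n))ᶜ) = 0 := by
          rw [Measure.dirac_apply' _ hms,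
            Set.indicator_of_notMem (by simp [mem_cyl_seg Z n])]
        rw [heq] at h0
        simp only [Measure.add_apply, Measure.smul_apply, smul_eq_mul] at h0
        have h1 := (add_eq_zero.mp h0).1
        have h2 := (add_eq_zero.mp h0).2
        rw [mul_eq_zero] at h1 h2
        have hμ1 : μ₁ ((cyl (seg Z n))ᶜ) = 0 := h1.resolve_left hα0.ne'
        have hμ2 : μ₂ ((cyl (seg Z n))ᶜ) = 0 := h2.resolve_left hα1'
        exact ⟨(prob_compl_eq_zero_iff (measurable_cyl _)).mp hμ1,
          (prob_compl_eq_zero_iff (measurable_cyl _)).mp hμ2⟩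
      have e1 : μ₁ = Measure.dirac Z := key μ₁ hp1 fun n => (hcyl1 n).1
      have e2 : μ₂ = Measure.dirac Z := key μ₂ hp2 fun n => (hcyl1 n).2
      exact hne (e1.trans e2.symm)
end

section
/- There is a constant c such that for every Borel probability measure μ on 2^ℕ and every n: n − C(μ↾n) ≤ 2·(n + K(n) − K(μ↾n)) + c. -/
open MeasureTheory Filter

namespace CKAux

open Nat.Partrec (Code)
open Nat.Partrec.Code
open Encodable

def ukStep (c : Code) (t : ℕ) (y : BStr) : Option BStr :=
  (evaln t c (encode y)).bind fun r => decode r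
def mE (z : BStr) (k : ℕ) : ℕ := (z.drop (k + 1)).findIdx fun b => !b
def mPi (z : BStr) (k : ℕ) : ℕ :=
  2 * cond ((z.drop (k + 1)).getD (mE z k + 1) false) 1 0 +
    cond ((z.drop (k + 1)).getD (mE z k + 2) false) 1 0
def mIdx (cK : Code) (z : BStr) (t : ℕ) : ℕ :=
  (List.range (z.length + 1)).findIdx fun i => (ukStep cK t (z.take i)).isSome
def mPost (cU : Code) (z : BStr) (t k n : ℕ) : Option BStr :=
  cond (z.getD k false)
    (if z.length = k + 1 + (mE z k + 1) + (n - 4 * mE z k) then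
      ukStep cU t ((z.drop (k + 1)).drop (mE z k + 3 + mPi z k))
    else none)
    (if z.length = k + 1 + n then some (z.drop (k + 1)) else none)
def mStep (cK cU : Code) (z : BStr) (t : ℕ) : Option BStr :=
  (ukStep cK t (z.take (mIdx cK z t))).bind fun s => mPost cU z t (mIdx cK z t) s.length
def mach (cK cU : Code) (z : BStr) : Part BStr := Nat.rfindOpt (mStep cK cU z)


theorem ukStep_mono {c : Code} {t t' : ℕ} {y : BStr} {s : BStr}
    (h : ukStep c t y = some s) (htt : t ≤ t') : ukStep c t' y = some s := by
  unfold ukStep at h ⊢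
  rcases Option.bind_eq_some_iff.1 h with ⟨r, hr, hd⟩
  have : evaln t' c (encode y) = some r := evaln_mono htt hr
  rw [this, Option.bind_eq_some_iff]
  exact ⟨r, rfl, hd⟩

theorem ukStep_sound {c : Code} {W : BStr →. BStr}
    (hc : ∀ y : BStr, eval c (encode y) = (W y).map encode)
    {t : ℕ} {y s : BStr} (h : ukStep c t y = some s) : s ∈ W y := by
  unfold ukStep at h
  rcases Option.bind_eq_some_iff.1 h with ⟨r, hr, hd⟩
  have h1 : r ∈ eval c (encode y) := evaln_sound hr
  rw [hc] at h1
  rcases Part.mem_map_iff _ |>.1 h1 with ⟨s', hs', rfl⟩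
  have : (decode (encode s') : Option BStr) = some s' := encodek s'
  rw [this] at hd
  cases hd
  exact hs'

theorem ukStep_complete {c : Code} {W : BStr →. BStr}
    (hc : ∀ y : BStr, eval c (encode y) = (W y).map encode)
    {y s : BStr} (h : s ∈ W y) : ∃ t, ukStep c t y = some s := by
  have h1 : encode s ∈ eval c (encode y) := by
    rw [hc]; exact Part.mem_map _ h
  rcases evaln_complete.1 h1 with ⟨t, ht⟩
  refine ⟨t, ?_⟩
  unfold ukStep
  rw [show evaln t c (encode y) = some (encode s) from ht, Option.bind_eq_some_iff]
  exact ⟨encode s, rfl, encodek s⟩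

section Spec
variable {UK : BStr →. BStr} {cK cU : Code}

theorem dom_take_eq (hpf : PrefixFreeDom UK) {z : BStr} {i j : ℕ}
    (hi : i ≤ z.length) (hj : j ≤ z.length)
    (hdi : (UK (z.take i)).Dom) (hdj : (UK (z.take j)).Dom) : i = j := by
  have key : ∀ i j : ℕ, i ≤ j → j ≤ z.length → (UK (z.take i)).Dom → (UK (z.take j)).Dom →
      i = j := by
    intro i j hij hjz hd1 hd2
    have hpre : z.take i <+: z.take j := by
      have h1 : (z.take j).take i = z.take i := by rw [List.take_take, min_eq_left hij]
      rw [← h1]; exact List.take_prefix _ _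
    have heq := hpf _ _ hd1 hd2 hpre
    have hl := congrArg List.length heq
    simp only [List.length_take] at hl
    omega
  rcases le_total i j with h | h
  · exact key i j h hj hdi hdj
  · exact (key j i h hi hdj hdi).symm

theorem mIdx_spec (hpf : PrefixFreeDom UK)
    (hcK : ∀ y : BStr, eval cK (encode y) = (UK y).map encode)
    {z : BStr} {t k : ℕ} {s : BStr}
    (h : ukStep cK t (z.take k) = some s) (hk : k ≤ z.length) : mIdx cK z t = k := by
  unfold mIdx
  have hklt : k < (List.range (z.length + 1)).length := by simp; omega
  rw [List.findIdx_eq hklt]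
  constructor
  · simp only [List.getElem_range, h, Option.isSome_some]
  · intro j hj
    simp only [List.getElem_range]
    by_contra hcon
    rw [Bool.not_eq_false, Option.isSome_iff_exists] at hcon
    obtain ⟨s', hs'⟩ := hcon
    have hdj : (UK (z.take j)).Dom := Part.dom_iff_mem.2 ⟨s', ukStep_sound hcK hs'⟩
    have hdk : (UK (z.take k)).Dom := Part.dom_iff_mem.2 ⟨s, ukStep_sound hcK h⟩
    have := dom_take_eq hpf (by omega : j ≤ z.length) hk hdj hdk
    omega

theorem mIdx_le {z : BStr} {t : ℕ} {s : BStr}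
    (h : ukStep cK t (z.take (mIdx cK z t)) = some s) : mIdx cK z t ≤ z.length := by
  by_contra hgt
  push_neg at hgt
  have hle : mIdx cK z t ≤ z.length + 1 := by
    have := List.findIdx_le_length (p := fun i => (ukStep cK t (z.take i)).isSome)
      (xs := List.range (z.length + 1))
    simpa [mIdx] using this
  have hfalse := List.not_of_lt_findIdx
    (p := fun i => (ukStep cK t (z.take i)).isSome)
    (xs := List.range (z.length + 1)) (i := z.length)
    (by simpa [mIdx] using (by omega : z.length < mIdx cK z t))
  simp only [List.getElem_range] at hfalse
  have h1 : z.take z.length = z := List.take_of_length_le le_rfl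
  have h2 : z.take (mIdx cK z t) = z := List.take_of_length_le (by omega)
  rw [h2] at h
  rw [h1, h] at hfalse
  simp at hfalse

theorem mStep_inv {z : BStr} {t : ℕ} {x : BStr}
    (h : mStep cK cU z t = some x) :
    ∃ s, ukStep cK t (z.take (mIdx cK z t)) = some s ∧
      ((z.getD (mIdx cK z t) false = false ∧ z.length = mIdx cK z t + 1 + s.length ∧
          x = z.drop (mIdx cK z t + 1)) ∨
        (z.getD (mIdx cK z t) false = true ∧
          z.length = mIdx cK z t + 1 + (mE z (mIdx cK z t) + 1) +
            (s.length - 4 * mE z (mIdx cK z t)) ∧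
          ukStep cU t ((z.drop (mIdx cK z t + 1)).drop
            (mE z (mIdx cK z t) + 3 + mPi z (mIdx cK z t))) = some x)) := by
  unfold mStep at h
  obtain ⟨s, hs, hpost⟩ := Option.bind_eq_some_iff.1 h
  refine ⟨s, hs, ?_⟩
  unfold mPost at hpost
  cases hb : z.getD (mIdx cK z t) false with
  | false =>
    rw [hb] at hpost
    simp only [cond_false] at hpost
    split_ifs at hpost with hlen
    exact Or.inl ⟨rfl, hlen, (Option.some.inj hpost).symm⟩
  | true =>
    rw [hb] at hpost
    simp only [cond_true] at hpost
    split_ifs at hpost with hlen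
    exact Or.inr ⟨rfl, hlen, hpost⟩

theorem mStep_mono (hpf : PrefixFreeDom UK)
    (hcK : ∀ y : BStr, eval cK (encode y) = (UK y).map encode)
    {z : BStr} {t t' : ℕ} {x : BStr}
    (h : mStep cK cU z t = some x) (htt : t ≤ t') : mStep cK cU z t' = some x := by
  have hinv := mStep_inv h
  obtain ⟨s, hs, hor⟩ := hinv
  have hkle : mIdx cK z t ≤ z.length := mIdx_le hs
  have hs' : ukStep cK t' (z.take (mIdx cK z t)) = some s := ukStep_mono hs htt
  have hk' : mIdx cK z t' = mIdx cK z t := mIdx_spec hpf hcK hs' hkle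
  unfold mStep
  rw [hk', hs', Option.bind_eq_some_iff]
  refine ⟨s, rfl, ?_⟩
  unfold mStep at h
  obtain ⟨s0, hs0, hpost⟩ := Option.bind_eq_some_iff.1 h
  have : s0 = s := by rw [hs0] at hs; exact Option.some.inj hs
  subst this
  unfold mPost at hpost ⊢
  rcases hor with ⟨hb, hlen, _⟩ | ⟨hb, hlen, _⟩ <;> rw [hb] at hpost ⊢ <;>
    simp only [cond_true, cond_false] at hpost ⊢
  · exact hpost
  · rw [if_pos hlen] at hpost ⊢
    exact ukStep_mono hpost htt

theorem mach_mem (hpf : PrefixFreeDom UK)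
    (hcK : ∀ y : BStr, eval cK (encode y) = (UK y).map encode)
    {z x : BStr} : x ∈ mach cK cU z ↔ ∃ t, mStep cK cU z t = some x := by
  unfold mach
  rw [Nat.rfindOpt_mono]
  · simp [Option.mem_def]
  · intro a m n hmn ha
    exact mStep_mono hpf hcK ha hmn

theorem mE_append {z r : BStr} {k : ℕ} (hk1 : k + 1 ≤ z.length)
    (hlt : mE z k < (z.drop (k + 1)).length) : mE (z ++ r) k = mE z k := by
  unfold mE at hlt ⊢
  have hd : (z ++ r).drop (k + 1) = z.drop (k + 1) ++ r :=
    List.drop_append_of_le_length hk1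
  rw [hd]
  exact (List.prefix_append _ r).findIdx_eq_of_findIdx_lt_length hlt

theorem mach_pf (hpf : PrefixFreeDom UK)
    (hcK : ∀ y : BStr, eval cK (encode y) = (UK y).map encode) :
    PrefixFreeDom (mach cK cU) := by
  intro z z' hdz hdz' hpre
  obtain ⟨x, hx⟩ := Part.dom_iff_mem.1 hdz
  obtain ⟨x', hx'⟩ := Part.dom_iff_mem.1 hdz'
  obtain ⟨t1, h1⟩ := (mach_mem hpf hcK).1 hx
  obtain ⟨t2, h2⟩ := (mach_mem hpf hcK).1 hx'
  have h1' := mStep_mono hpf hcK h1 (le_max_left t1 t2)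
  have h2' := mStep_mono hpf hcK h2 (le_max_right t1 t2)
  set t := max t1 t2
  obtain ⟨s, hs, hor⟩ := mStep_inv h1'
  obtain ⟨s', hs', hor'⟩ := mStep_inv h2'
  obtain ⟨r, rfl⟩ := hpre
  set k := mIdx cK z t with hkdef
  set k' := mIdx cK (z ++ r) t with hk'def
  have hklt : k < z.length := by rcases hor with ⟨_, h, _⟩ | ⟨_, h, _⟩ <;> omega
  have hk'le : k' ≤ (z ++ r).length := mIdx_le hs'
  have htk : (z ++ r).take k = z.take k := List.take_append_of_le_length (by omega)
  have hdk : (UK ((z ++ r).take k)).Dom := by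
    rw [htk]; exact Part.dom_iff_mem.2 ⟨s, ukStep_sound hcK hs⟩
  have hdk' : (UK ((z ++ r).take k')).Dom := Part.dom_iff_mem.2 ⟨s', ukStep_sound hcK hs'⟩
  have hkk : k' = k := dom_take_eq hpf hk'le (by simp; omega) hdk' hdk
  rw [hkk] at hs' hor'
  have hss : s' = s := by
    rw [htk, hs] at hs'
    exact (Option.some.inj hs').symm
  rw [hss] at hor'
  have hflag : (z ++ r).getD k false = z.getD k false := by
    rw [List.getD_eq_getElem?_getD, List.getD_eq_getElem?_getD,
      List.getElem?_append_left hklt]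
  have hrnil : r.length = 0 := by
    rcases hor with ⟨hb, hlen, _⟩ | ⟨hb, hlen, _⟩ <;>
      rcases hor' with ⟨hb', hlen', _⟩ | ⟨hb', hlen', _⟩
    · rw [List.length_append] at hlen'; omega
    · rw [hflag, hb] at hb'; cases hb'
    · rw [hflag, hb] at hb'; cases hb'
    · have hlt : mE z k < (z.drop (k + 1)).length := by
        rw [List.length_drop]; omega
      rw [mE_append (by omega) hlt, List.length_append] at hlen'
      omega
  have : r = [] := List.length_eq_zero_iff.1 hrnil
  rw [this, List.append_nil]



theorem mach_correct_raw (hpf : PrefixFreeDom UK)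
    (hcK : ∀ y : BStr, eval cK (encode y) = (UK y).map encode)
    {q x : BStr} {n : ℕ} (hq : numStr n ∈ UK q) (hx : x.length = n) :
    x ∈ mach cK cU (q ++ false :: x) := by
  obtain ⟨t, ht⟩ := ukStep_complete hcK hq
  set z := q ++ false :: x with hz
  have hzlen : z.length = q.length + 1 + n := by
    simp only [hz, List.length_append, List.length_cons]; omega
  have htk : z.take q.length = q := by rw [hz]; exact List.take_left
  have ht' : ukStep cK t (z.take q.length) = some (numStr n) := by rw [htk]; exact ht
  have hk : mIdx cK z t = q.length := mIdx_spec hpf hcK ht' (by omega)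
  apply (mach_mem hpf hcK).2
  refine ⟨t, ?_⟩
  unfold mStep
  rw [hk, ht', Option.bind_eq_some_iff]
  refine ⟨numStr n, rfl, ?_⟩
  unfold mPost
  have hflag : z.getD q.length false = false := by
    rw [hz, List.getD_append_right _ _ _ _ (le_refl _)]
    simp
  have hcond : z.length = q.length + 1 + (numStr n).length := by
    simp only [numStr, List.length_replicate]; omega
  have hdropx : z.drop (q.length + 1) = x := by
    rw [hz, show q ++ false :: x = (q ++ [false]) ++ x by simp,
      show q.length + 1 = (q ++ [false]).length by simp]
    exact List.drop_left
  rw [hflag]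
  simp only [cond_false]
  rw [if_pos hcond, hdropx]

theorem mach_correct_code {U' : BStr →. BStr} (hpf : PrefixFreeDom UK)
    (hcK : ∀ y : BStr, eval cK (encode y) = (UK y).map encode)
    (hcU : ∀ y : BStr, eval cU (encode y) = (U' y).map encode)
    {q p x : BStr} {n e π : ℕ}
    (hq : numStr n ∈ UK q) (hp : x ∈ U' p) (hπ : π < 4)
    (hlen : p.length + 2 + π + 4 * e = n) :
    x ∈ mach cK cU (q ++ true :: (List.replicate e true ++ false ::
      decide (π / 2 = 1) :: decide (π % 2 = 1) :: (List.replicate π false ++ p))) := by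
  obtain ⟨t1, ht1⟩ := ukStep_complete hcK hq
  obtain ⟨t2, ht2⟩ := ukStep_complete hcU hp
  set b1 := decide (π / 2 = 1) with hb1def
  set b2 := decide (π % 2 = 1) with hb2def
  set w := List.replicate e true ++ false :: b1 :: b2 :: (List.replicate π false ++ p) with hw
  set z := q ++ true :: w with hz
  set t := max t1 t2 with htdef
  have hwlen : w.length = e + 3 + π + p.length := by
    simp only [hw, List.length_append, List.length_cons, List.length_replicate]; omega
  have hzlen : z.length = q.length + 1 + w.length := by
    simp only [hz, List.length_append, List.length_cons]; omega
  have htk : z.take q.length = q := by rw [hz]; exact List.take_left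
  have ht1' : ukStep cK t (z.take q.length) = some (numStr n) := by
    rw [htk]; exact ukStep_mono ht1 (le_max_left _ _)
  have hk : mIdx cK z t = q.length := mIdx_spec hpf hcK ht1' (by omega)
  apply (mach_mem hpf hcK).2
  refine ⟨t, ?_⟩
  unfold mStep
  rw [hk, ht1', Option.bind_eq_some_iff]
  refine ⟨numStr n, rfl, ?_⟩
  unfold mPost
  have hflag : z.getD q.length false = true := by
    rw [hz, List.getD_append_right _ _ _ _ (le_refl _)]
    simp
  have hdropw : z.drop (q.length + 1) = w := by
    rw [hz, show q ++ true :: w = (q ++ [true]) ++ w by simp,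
      show q.length + 1 = (q ++ [true]).length by simp]
    exact List.drop_left
  have hwe : e < w.length := by omega
  have he : mE z q.length = e := by
    unfold mE
    rw [hdropw]
    apply (List.findIdx_eq hwe).2
    constructor
    · have hwget : w[e]'hwe = false := by
        simp only [hw]
        rw [List.getElem_append_right (by simp : (List.replicate e true).length ≤ e)]
        simp
      rw [hwget]
      rfl
    · intro j hj
      have hwj : w[j]'(by omega) = true := by
        simp only [hw]
        rw [List.getElem_append_left (by simpa using hj : j < (List.replicate e true).length)]
        simp
      rw [hwj]
      rfl
  have hgb1 : w.getD (e + 1) false = b1 := by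
    rw [hw, List.getD_append_right _ _ _ _ (by simp : (List.replicate e true).length ≤ e + 1)]
    simp
  have hgb2 : w.getD (e + 2) false = b2 := by
    rw [hw, List.getD_append_right _ _ _ _ (by simp : (List.replicate e true).length ≤ e + 2)]
    simp
  have hpi : mPi z q.length = π := by
    unfold mPi
    rw [he, hdropw, hgb1, hgb2, hb1def, hb2def]
    interval_cases π <;> simp
  have hcond : z.length = q.length + 1 + (mE z q.length + 1) +
      ((numStr n).length - 4 * mE z q.length) := by
    rw [he]
    simp only [numStr, List.length_replicate]
    omega
  rw [hflag]
  simp only [cond_true]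
  rw [if_pos hcond, hdropw]
  have hdropp : w.drop (mE z q.length + 3 + mPi z q.length) = p := by
    rw [he, hpi, hw,
      show List.replicate e true ++ false :: b1 :: b2 :: (List.replicate π false ++ p) =
        (List.replicate e true ++ false :: b1 :: b2 :: List.replicate π false) ++ p by simp,
      show e + 3 + π =
        (List.replicate e true ++ false :: b1 :: b2 :: List.replicate π false).length by
          simp only [List.length_append, List.length_cons, List.length_replicate]; omega]
    exact List.drop_left
  rw [hdropp]
  exact ukStep_mono ht2 (le_max_right _ _)


end Spec

theorem take_primrec : Primrec₂ (fun (l : BStr) (n : ℕ) => l.take n) := by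
  have h : Primrec fun p : BStr × ℕ =>
      (List.range (min p.2 p.1.length)).map fun i => p.1.getD i false :=
    Primrec.list_map
      (Primrec.list_range.comp (Primrec.nat_min.comp Primrec.snd
        (Primrec.list_length.comp Primrec.fst)))
      (((Primrec.list_getD false).comp (Primrec.fst.comp Primrec.fst) Primrec.snd).to₂)
  refine Primrec₂.of_eq h.to₂ fun l n => ?_
  apply List.ext_getElem
  · simp
  · intro i h1 h2
    simp only [List.getElem_map, List.getElem_range]
    rw [List.getD_eq_getElem]
    · simp
    · simp at h1; omega

theorem drop_primrec : Primrec₂ (fun (l : BStr) (n : ℕ) => l.drop n) := by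
  have h : Primrec fun p : BStr × ℕ =>
      (List.range (p.1.length - p.2)).map fun i => p.1.getD (p.2 + i) false :=
    Primrec.list_map
      (Primrec.list_range.comp (Primrec.nat_sub.comp
        (Primrec.list_length.comp Primrec.fst) Primrec.snd))
      (((Primrec.list_getD false).comp (Primrec.fst.comp Primrec.fst)
        (Primrec.nat_add.comp (Primrec.snd.comp Primrec.fst) Primrec.snd)).to₂)
  refine Primrec₂.of_eq h.to₂ fun l n => ?_
  apply List.ext_getElem
  · simp
  · intro i h1 h2
    simp only [List.getElem_map, List.getElem_range]
    rw [List.getD_eq_getElem]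
    · simp
    · simp at h1; omega

theorem ukStep_primrec (c : Code) : Primrec₂ fun (t : ℕ) (y : BStr) => ukStep c t y := by
  have h1 : Primrec fun p : ℕ × BStr => evaln p.1 c (encode p.2) :=
    primrec_evaln.comp ((Primrec.fst.pair (Primrec.const c)).pair
      (Primrec.encode.comp Primrec.snd))
  exact (Primrec.option_bind h1 ((Primrec.decode.comp Primrec.snd).to₂)).to₂

theorem mE_primrec : Primrec₂ mE :=
  (Primrec.list_findIdx
    (drop_primrec.comp Primrec.fst (Primrec.succ.comp Primrec.snd))
    (((Primrec.dom_bool not).comp Primrec.snd).to₂)).to₂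

theorem mPi_primrec : Primrec₂ mPi := by
  have hdrop : Primrec fun p : BStr × ℕ => p.1.drop (p.2 + 1) :=
    drop_primrec.comp Primrec.fst (Primrec.succ.comp Primrec.snd)
  have he : Primrec fun p : BStr × ℕ => mE p.1 p.2 := mE_primrec.comp Primrec.fst Primrec.snd
  have hbit : ∀ j : ℕ, Primrec fun p : BStr × ℕ =>
      (cond ((p.1.drop (p.2 + 1)).getD (mE p.1 p.2 + j) false) 1 0 : ℕ) := fun j =>
    Primrec.cond ((Primrec.list_getD false).comp hdrop
        (Primrec.nat_add.comp he (Primrec.const j)))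
      (Primrec.const 1) (Primrec.const 0)
  exact (Primrec.nat_add.comp
    (Primrec.nat_mul.comp (Primrec.const 2) (hbit 1)) (hbit 2)).to₂

theorem mIdx_primrec (cK : Code) : Primrec₂ (fun (z : BStr) (t : ℕ) => mIdx cK z t) :=
  (Primrec.list_findIdx
    (Primrec.list_range.comp (Primrec.succ.comp (Primrec.list_length.comp Primrec.fst)))
    ((Primrec.option_isSome.comp ((ukStep_primrec cK).comp (Primrec.snd.comp Primrec.fst)
      (take_primrec.comp (Primrec.fst.comp Primrec.fst) Primrec.snd))).to₂)).to₂

theorem mStep_computable (cK cU : Code) : Computable₂ (mStep cK cU) := by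
  have hk : Primrec fun p : BStr × ℕ => mIdx cK p.1 p.2 :=
    (mIdx_primrec cK).comp Primrec.fst Primrec.snd
  have hsopt : Primrec fun p : BStr × ℕ => ukStep cK p.2 (p.1.take (mIdx cK p.1 p.2)) :=
    (ukStep_primrec cK).comp Primrec.snd (take_primrec.comp Primrec.fst hk)
  have hg : Primrec₂ fun (p : BStr × ℕ) (s : BStr) =>
      mPost cU p.1 p.2 (mIdx cK p.1 p.2) s.length := by
    have hz : Primrec fun q : (BStr × ℕ) × BStr => q.1.1 := Primrec.fst.comp Primrec.fst
    have ht : Primrec fun q : (BStr × ℕ) × BStr => q.1.2 := Primrec.snd.comp Primrec.fst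
    have hk' : Primrec fun q : (BStr × ℕ) × BStr => mIdx cK q.1.1 q.1.2 := hk.comp Primrec.fst
    have hn : Primrec fun q : (BStr × ℕ) × BStr => q.2.length :=
      Primrec.list_length.comp Primrec.snd
    have hlen : Primrec fun q : (BStr × ℕ) × BStr => q.1.1.length :=
      Primrec.list_length.comp hz
    have he : Primrec fun q : (BStr × ℕ) × BStr => mE q.1.1 (mIdx cK q.1.1 q.1.2) :=
      mE_primrec.comp hz hk'
    have hpi : Primrec fun q : (BStr × ℕ) × BStr => mPi q.1.1 (mIdx cK q.1.1 q.1.2) :=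
      mPi_primrec.comp hz hk'
    have hflag : Primrec fun q : (BStr × ℕ) × BStr => q.1.1.getD (mIdx cK q.1.1 q.1.2) false :=
      (Primrec.list_getD false).comp hz hk'
    have hdrop1 : Primrec fun q : (BStr × ℕ) × BStr => q.1.1.drop (mIdx cK q.1.1 q.1.2 + 1) :=
      drop_primrec.comp hz (Primrec.succ.comp hk')
    have htrue : Primrec fun q : (BStr × ℕ) × BStr =>
        (if q.1.1.length = mIdx cK q.1.1 q.1.2 + 1 + (mE q.1.1 (mIdx cK q.1.1 q.1.2) + 1) +
            (q.2.length - 4 * mE q.1.1 (mIdx cK q.1.1 q.1.2)) then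
          ukStep cU q.1.2 ((q.1.1.drop (mIdx cK q.1.1 q.1.2 + 1)).drop
            (mE q.1.1 (mIdx cK q.1.1 q.1.2) + 3 + mPi q.1.1 (mIdx cK q.1.1 q.1.2)))
        else none) := by
      refine Primrec.ite (Primrec.eq.comp hlen ?_) ((ukStep_primrec cU).comp ht
        (drop_primrec.comp hdrop1 (Primrec.nat_add.comp
          (Primrec.nat_add.comp he (Primrec.const 3)) hpi))) (Primrec.const none)
      exact Primrec.nat_add.comp (Primrec.nat_add.comp (Primrec.succ.comp hk')
        (Primrec.succ.comp he)) (Primrec.nat_sub.comp hn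
          (Primrec.nat_mul.comp (Primrec.const 4) he))
    have hfalse : Primrec fun q : (BStr × ℕ) × BStr =>
        (if q.1.1.length = mIdx cK q.1.1 q.1.2 + 1 + q.2.length then
          some (q.1.1.drop (mIdx cK q.1.1 q.1.2 + 1)) else none) :=
      Primrec.ite (Primrec.eq.comp hlen
          (Primrec.nat_add.comp (Primrec.succ.comp hk') hn))
        (Primrec.option_some.comp hdrop1) (Primrec.const none)
    exact (Primrec.cond hflag htrue hfalse).to₂
  exact (Primrec.option_bind hsopt hg).to₂.to_comp

theorem mach_partrec (cK cU : Code) : Partrec (mach cK cU) :=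
  Partrec.rfindOpt (mStep_computable cK cU)


theorem cpx_le {W : BStr →. BStr} {x q : BStr} (h : x ∈ W q) : cpx W x ≤ q.length :=
  Nat.sInf_le ⟨q, rfl, h⟩

theorem cpx_spec {W : BStr →. BStr} {x : BStr} (h : ∃ q, x ∈ W q) :
    ∃ q : BStr, q.length = cpx W x ∧ x ∈ W q := by
  obtain ⟨q0, hq0⟩ := h
  exact Nat.sInf_mem (s := {n | ∃ q : BStr, q.length = n ∧ x ∈ W q}) ⟨q0.length, q0, rfl, hq0⟩

theorem replicate_primrec (b : Bool) : Primrec fun n : ℕ => List.replicate n b := by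
  have h : Primrec fun n : ℕ => (List.range n).map fun _ => b :=
    Primrec.list_map Primrec.list_range ((Primrec.const b).to₂)
  exact h.of_eq fun n => by simp [List.map_const']

def m0fun (p : BStr) : Option BStr :=
  if p = List.replicate (p.length - 1) true ++ [false] then
    some (numStr (p.length - 1)) else none

def M0 : BStr →. BStr := fun p => Part.ofOption (m0fun p)

theorem M0_partrec : Partrec M0 := by
  have hlen : Primrec fun p : BStr => p.length - 1 :=
    Primrec.nat_sub.comp Primrec.list_length (Primrec.const 1)
  have hR : Primrec fun p : BStr => List.replicate (p.length - 1) true ++ [false] :=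
    Primrec.list_append.comp ((replicate_primrec true).comp hlen) (Primrec.const [false])
  have hN : Primrec fun p : BStr => numStr (p.length - 1) :=
    (replicate_primrec false).comp hlen
  have hm0 : Computable m0fun :=
    (Primrec.ite (Primrec.eq.comp Primrec.id hR)
      (Primrec.option_some.comp hN) (Primrec.const none)).to_comp
  exact Computable.ofOption hm0

theorem M0_dom {p : BStr} (h : (M0 p).Dom) :
    p = List.replicate (p.length - 1) true ++ [false] := by
  by_contra hc
  unfold M0 m0fun at h
  rw [if_neg hc] at h
  simp [Part.ofOption] at h

theorem M0_pf : PrefixFreeDom M0 := by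
  intro p q hp hq hpre
  have hp' := M0_dom hp
  have hq' := M0_dom hq
  set a := p.length - 1 with ha
  set b := q.length - 1 with hb
  have hpl : p.length = a + 1 := by
    conv_lhs => rw [hp']
    simp
  have hql : q.length = b + 1 := by
    conv_lhs => rw [hq']
    simp
  have hle : p.length ≤ q.length := hpre.length_le
  rcases Nat.lt_or_ge a b with hab | hab
  · exfalso
    have hpa : p[a]'(by omega) = false := by
      have h1 : p[a]'(by omega) = (List.replicate a true ++ [false])[a]'(by simp) :=
        List.getElem_of_eq hp' _
      rw [h1, List.getElem_append_right (by simp : (List.replicate a true).length ≤ a)]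
      simp
    have hqa : q[a]'(by omega) = true := by
      have h1 : q[a]'(by omega) = (List.replicate b true ++ [false])[a]'(by simp; omega) :=
        List.getElem_of_eq hq' _
      rw [h1, List.getElem_append_left (by simpa using hab : a < (List.replicate b true).length)]
      simp
    have h2 := hpre.getElem (show a < p.length by omega)
    rw [hpa, hqa] at h2
    cases h2
  · exact hpre.eq_of_length (by omega)

theorem M0_mem (n : ℕ) : numStr n ∈ M0 (List.replicate n true ++ [false]) := by
  unfold M0 m0fun
  have hl : (List.replicate n true ++ [false]).length - 1 = n := by simp
  rw [if_pos (by rw [hl])]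
  rw [hl]
  simp [Part.ofOption]


theorem cyl_measurable (x : BStr) : MeasurableSet (cyl x) := by
  have h : cyl x = ⋂ i : Fin x.length, (fun Z : Cantor => Z i.1) ⁻¹' {x.get i} := by
    ext Z
    simp only [cyl, Set.mem_setOf_eq, Set.mem_iInter, Set.mem_preimage, Set.mem_singleton_iff]
  rw [h]
  exact MeasurableSet.iInter fun i =>
    (measurable_pi_apply i.1) (measurableSet_singleton _)

theorem mem_cyl_ofFn {n : ℕ} (v : Fin n → Bool) (Z : Cantor) :
    Z ∈ cyl (List.ofFn v) ↔ ∀ i : Fin n, Z i.1 = v i := by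
  constructor
  · intro h i
    have hi : (i : ℕ) < (List.ofFn v).length := by simp [i.2]
    have := h ⟨i.1, hi⟩
    simpa [List.get_ofFn] using this
  · intro h i
    have hi : (i : ℕ) < n := by simpa using i.2
    have := h ⟨i.1, hi⟩
    simp only [List.get_ofFn]
    exact this

theorem sum_cyl (μ : Measure Cantor) [IsProbabilityMeasure μ] (n : ℕ) :
    ∑ v : Fin n → Bool, (μ (cyl (List.ofFn v))).toReal = 1 := by
  have hdisj : Pairwise (Function.onFun Disjoint fun v : Fin n → Bool => cyl (List.ofFn v)) := by
    intro v w hvw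
    have : ∃ i, v i ≠ w i := by
      by_contra hc
      push_neg at hc
      exact hvw (funext hc)
    obtain ⟨i, hi⟩ := this
    rw [Function.onFun, Set.disjoint_left]
    intro Z hv hw
    have h1 := (mem_cyl_ofFn v Z).1 hv i
    have h2 := (mem_cyl_ofFn w Z).1 hw i
    exact hi (h1 ▸ h2 ▸ rfl)
  have huniv : (⋃ v : Fin n → Bool, cyl (List.ofFn v)) = Set.univ := by
    ext Z
    simp only [Set.mem_iUnion, Set.mem_univ, iff_true]
    exact ⟨fun i => Z i.1, (mem_cyl_ofFn _ Z).2 fun i => rfl⟩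
  have hsum : ∑' v : Fin n → Bool, μ (cyl (List.ofFn v)) = 1 := by
    rw [← measure_iUnion hdisj fun v => cyl_measurable _, huniv, measure_univ]
  rw [tsum_fintype] at hsum
  have := congrArg ENNReal.toReal hsum
  rw [ENNReal.toReal_sum (fun v _ => measure_ne_top μ _)] at this
  simpa using this


end CKAux

/-- there is a constant `c` such that for every probability
measure `μ` and every `n`:
`n - C(μ↾n) ≤ 2·(n + K(n) - K(μ↾n)) + c`. -/
theorem C_deficiency_le_K_deficiency
    (U UK : BStr →. BStr) (hU : UniversalPlain U) (hUK : UniversalPrefixFree UK) :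
    ∃ c : ℝ, ∀ μ : Measure Cantor, IsProbabilityMeasure μ → ∀ n : ℕ,
      (n : ℝ) - avgCpx U μ n ≤
        2 * ((n : ℝ) + (cpxN UK n : ℝ) - avgCpx UK μ n) + c := by
  classical
  obtain ⟨hUKpart, hUKpf, hUKuniv⟩ := hUK
  obtain ⟨hUpart, hUuniv⟩ := hU
  obtain ⟨cK, hcK0⟩ := Nat.Partrec.Code.exists_code.1 hUKpart
  obtain ⟨cU, hcU0⟩ := Nat.Partrec.Code.exists_code.1 hUpart
  have hcK : ∀ y : BStr, Nat.Partrec.Code.eval cK (Encodable.encode y) =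
      (UK y).map Encodable.encode := by
    intro y
    rw [hcK0]
    simp [Encodable.encodek]
  have hcU : ∀ y : BStr, Nat.Partrec.Code.eval cU (Encodable.encode y) =
      (U y).map Encodable.encode := by
    intro y
    rw [hcU0]
    simp [Encodable.encodek]
  -- the identity machine shows that plain complexity is at most length + O(1),
  -- and in particular minimal programs exist
  have hid : Partrec (fun p : BStr => Part.some p) := Computable.id
  obtain ⟨aC, haC⟩ := hUuniv _ hid
  have hCex : ∀ x : BStr, ∃ p : BStr, p.length = cpx U x ∧ x ∈ U p := by
    intro x
    obtain ⟨q, _, hq⟩ := haC x x (Part.mem_some x)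
    exact CKAux.cpx_spec ⟨q, hq⟩
  -- the machine M0 shows that minimal prefix-free programs for `numStr n` exist
  obtain ⟨b0, hb0⟩ := hUKuniv CKAux.M0 CKAux.M0_partrec CKAux.M0_pf
  have hKex : ∀ n : ℕ, ∃ q : BStr, q.length = cpxN UK n ∧ numStr n ∈ UK q := by
    intro n
    obtain ⟨q, _, hq⟩ := hb0 _ _ (CKAux.M0_mem n)
    exact CKAux.cpx_spec ⟨q, hq⟩
  -- the main machine
  obtain ⟨bM, hbM⟩ := hUKuniv (CKAux.mach cK cU) (CKAux.mach_partrec cK cU)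
    (CKAux.mach_pf hUKpf hcK)
  -- pointwise bound: 2·K(x) ≤ |x| + C(x) + 2·K(|x|) + (2bM + 9)
  have hpt : ∀ x : BStr,
      2 * cpx UK x ≤ x.length + cpx U x + 2 * cpxN UK x.length + (2 * bM + 9) := by
    intro x
    obtain ⟨q, hqlen, hq⟩ := hKex x.length
    obtain ⟨p, hplen, hp⟩ := hCex x
    by_cases hcase : cpx U x + 2 ≤ x.length
    · set d := x.length - cpx U x - 2 with hd
      have hπ : d % 4 < 4 := Nat.mod_lt _ (by norm_num)
      have hde : 4 * (d / 4) + d % 4 = d := Nat.div_add_mod d 4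
      have hlen2 : p.length + 2 + d % 4 + 4 * (d / 4) = x.length := by omega
      have hmem := CKAux.mach_correct_code hUKpf hcK hcU hq hp hπ hlen2
      obtain ⟨q', hq'len, hq'⟩ := hbM _ _ hmem
      have h1 : cpx UK x ≤ q'.length := CKAux.cpx_le hq'
      have h2 : (q ++ true :: (List.replicate (d / 4) true ++ false ::
          decide (d % 4 / 2 = 1) :: decide (d % 4 % 2 = 1) ::
          (List.replicate (d % 4) false ++ p))).length
          = q.length + 1 + (d / 4 + 3 + d % 4 + p.length) := by
        simp only [List.length_append, List.length_cons, List.length_replicate]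
        omega
      rw [h2] at hq'len
      omega
    · have hmem := CKAux.mach_correct_raw (cU := cU) hUKpf hcK hq rfl
      obtain ⟨q', hq'len, hq'⟩ := hbM _ _ hmem
      have h1 : cpx UK x ≤ q'.length := CKAux.cpx_le hq'
      have h2 : (q ++ false :: x).length = q.length + 1 + x.length := by
        simp only [List.length_append, List.length_cons]; omega
      rw [h2] at hq'len
      omega
  refine ⟨((2 * bM + 9 : ℕ) : ℝ), ?_⟩
  intro μ hμ n
  set c0 : ℝ := ((2 * bM + 9 : ℕ) : ℝ) with hc0
  have hw : ∀ v : Fin n → Bool, 0 ≤ (μ (cyl (List.ofFn v))).toReal :=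
    fun v => ENNReal.toReal_nonneg
  have hsum1 := CKAux.sum_cyl μ n
  have key : 2 * avgCpx UK μ n ≤
      (n : ℝ) + avgCpx U μ n + 2 * (cpxN UK n : ℝ) + c0 := by
    have hptR : ∀ v : Fin n → Bool,
        (2 * (cpx UK (List.ofFn v) : ℝ)) * (μ (cyl (List.ofFn v))).toReal ≤
        ((n : ℝ) + (cpx U (List.ofFn v) : ℝ) + 2 * (cpxN UK n : ℝ) + c0) *
          (μ (cyl (List.ofFn v))).toReal := by
      intro v
      apply mul_le_mul_of_nonneg_right _ (hw v)
      have h := hpt (List.ofFn v)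
      rw [List.length_ofFn] at h
      rw [hc0]
      push_cast
      exact_mod_cast h
    calc 2 * avgCpx UK μ n
        = ∑ v : Fin n → Bool,
            (2 * (cpx UK (List.ofFn v) : ℝ)) * (μ (cyl (List.ofFn v))).toReal := by
          rw [avgCpx, Finset.mul_sum]
          exact Finset.sum_congr rfl fun v _ => by ring
      _ ≤ ∑ v : Fin n → Bool,
            ((n : ℝ) + (cpx U (List.ofFn v) : ℝ) + 2 * (cpxN UK n : ℝ) + c0) *
              (μ (cyl (List.ofFn v))).toReal :=
          Finset.sum_le_sum fun v _ => hptR v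
      _ = ∑ v : Fin n → Bool,
            (((n : ℝ) + 2 * (cpxN UK n : ℝ) + c0) * (μ (cyl (List.ofFn v))).toReal +
              (cpx U (List.ofFn v) : ℝ) * (μ (cyl (List.ofFn v))).toReal) :=
          Finset.sum_congr rfl fun v _ => by ring
      _ = ((n : ℝ) + 2 * (cpxN UK n : ℝ) + c0) *
            (∑ v : Fin n → Bool, (μ (cyl (List.ofFn v))).toReal) + avgCpx U μ n := by
          rw [Finset.sum_add_distrib, ← Finset.mul_sum, avgCpx]
      _ = (n : ℝ) + avgCpx U μ n + 2 * (cpxN UK n : ℝ) + c0 := by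
          rw [hsum1]; ring
  linarith [key]
end

section
/- There is a constant c such that K(x ∣ n, C(n)) ≤ 2·(C(x) − C(n)) + c for every n and every binary string x of length n. -/
open MeasureTheory Filter

/-- A universal plain machine with an auxiliary (conditioning) input;
natural-number conditions are identified with unary strings and pairs
are encoded by the computable pairing `Nat.pair`. -/
def UniversalPlainCond (U : BStr → ℕ →. BStr) : Prop :=
  Partrec₂ U ∧ ∀ M : BStr → ℕ →. BStr, Partrec₂ M →
    ∃ c : ℕ, ∀ p y x, x ∈ M p y → ∃ q : BStr, q.length ≤ p.length + c ∧ x ∈ U q y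

/-- For every condition `y`, the domain of `M (·) y` is an antichain under
the prefix relation. -/
def PrefixFreeDomCond (M : BStr → ℕ →. BStr) : Prop :=
  ∀ (y : ℕ) (p q : BStr), (M p y).Dom → (M q y).Dom → p <+: q → p = q

/-- A universal prefix-free machine with an auxiliary (conditioning) input. -/
def UniversalPrefixFreeCond (U : BStr → ℕ →. BStr) : Prop :=
  Partrec₂ U ∧ PrefixFreeDomCond U ∧
  ∀ M : BStr → ℕ →. BStr, Partrec₂ M → PrefixFreeDomCond M →
    ∃ c : ℕ, ∀ p y x, x ∈ M p y → ∃ q : BStr, q.length ≤ p.length + c ∧ x ∈ U q y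

/-- Conditional Kolmogorov complexity of `x` given `y`, with respect to the
machine `U` with auxiliary input. -/
noncomputable def cpxCond (U : BStr → ℕ →. BStr) (x : BStr) (y : ℕ) : ℕ :=
  sInf {n | ∃ q : BStr, q.length = n ∧ x ∈ U q y}

set_option maxHeartbeats 1000000

namespace KCD

abbrev BStr' : Type := List Bool

/-- little-endian value of a bit string -/
def unpad (l : List Bool) : ℕ := l.foldr (fun b n => 2 * n + cond b 1 0) 0

/-- little-endian `ℓ`-bit representation of `i` -/
def pad (i ℓ : ℕ) : List Bool := (List.range ℓ).map fun j => decide (i / 2 ^ j % 2 = 1)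

@[simp] lemma unpad_nil : unpad [] = 0 := rfl
@[simp] lemma unpad_cons (b : Bool) (l : List Bool) :
    unpad (b :: l) = 2 * unpad l + cond b 1 0 := rfl

@[simp] lemma pad_length (i ℓ : ℕ) : (pad i ℓ).length = ℓ := by
  simp [pad]

lemma pad_succ (i ℓ : ℕ) :
    pad i (ℓ + 1) = decide (i % 2 = 1) :: pad (i / 2) ℓ := by
  unfold pad
  rw [List.range_succ_eq_map, List.map_cons, List.map_map]
  congr 1
  · simp
  · apply List.map_congr_left
    intro j _
    simp only [Function.comp_apply, pow_succ']
    rw [← Nat.div_div_eq_div_mul]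

lemma unpad_pad {i ℓ : ℕ} (h : i < 2 ^ ℓ) : unpad (pad i ℓ) = i := by
  induction ℓ generalizing i with
  | zero => simp [pad, Nat.lt_one_iff.mp (by simpa using h)]
  | succ ℓ ih =>
    have hd : i / 2 < 2 ^ ℓ := by
      rw [pow_succ] at h; omega
    rw [pad_succ, unpad_cons, ih hd]
    rcases Nat.mod_two_eq_zero_or_one i with h2 | h2 <;> simp [h2] <;> omega

lemma unpad_lt (l : List Bool) : unpad l < 2 ^ l.length := by
  induction l with
  | nil => simp [unpad]
  | cons b l ih =>
    simp only [unpad_cons, List.length_cons, pow_succ]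
    cases b <;> simp <;> omega

lemma pad_unpad (l : List Bool) : pad (unpad l) l.length = l := by
  induction l with
  | nil => simp [pad]
  | cons b l ih =>
    rw [List.length_cons, pad_succ]
    have h1 : (2 * unpad l + cond b 1 0) % 2 = cond b 1 0 := by
      cases b <;> simp [Nat.add_mul_mod_self_left, Nat.mul_mod_right] <;> omega
    have h2 : (2 * unpad l + cond b 1 0) / 2 = unpad l := by
      cases b <;> simp <;> omega
    rw [unpad_cons, h1, h2, ih]
    cases b <;> simp

lemma unpad_inj {l l' : List Bool} (hl : l.length = l'.length)
    (h : unpad l = unpad l') : l = l' := by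
  rw [← pad_unpad l, ← pad_unpad l', h, hl]

/-- parse a string of the form `true^ℓ ++ [false] ++ u ++ r` with `|u| = ℓ`,
returning `(unpad u, r)`. -/
def parse (p : List Bool) : Option (ℕ × List Bool) :=
  if 2 * p.idxOf false + 1 ≤ p.length then
    some (unpad ((List.range (p.idxOf false)).map fun j => p.getD (p.idxOf false + 1 + j) false),
          (List.range (p.length - (2 * p.idxOf false + 1))).map
            fun j => p.getD (2 * p.idxOf false + 1 + j) false)
  else none

lemma indexOf_false_rep (ℓ : ℕ) (z : List Bool) :
    (List.replicate ℓ true ++ false :: z).idxOf false = ℓ := by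
  induction ℓ with
  | zero => simp [List.idxOf_cons]
  | succ ℓ ih => simpa [List.replicate_succ, List.idxOf_cons] using ih

lemma getD_append_offset (x y : List Bool) (j : ℕ) :
    (x ++ y).getD (x.length + j) false = y.getD j false := by
  simp [List.getD, List.getElem?_append_right (Nat.le_add_right _ _)]

lemma range_map_getD (w : List Bool) {n : ℕ} (h : n ≤ w.length) :
    ((List.range n).map fun j => w.getD j false) = w.take n := by
  induction n with
  | zero => simp
  | succ n ih =>
    rw [List.range_succ, List.map_append, ih (by omega), List.take_succ]
    simp [List.getD, List.getElem?_eq_getElem (show n < w.length by omega)]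

/-- parse on a well-formed string -/
lemma parse_spec (ℓ : ℕ) (w : List Bool) (h : ℓ ≤ w.length) :
    parse (List.replicate ℓ true ++ false :: w) = some (unpad (w.take ℓ), w.drop ℓ) := by
  have hidx : (List.replicate ℓ true ++ false :: w).idxOf false = ℓ :=
    indexOf_false_rep ℓ w
  have hlen : (List.replicate ℓ true ++ false :: w).length = ℓ + 1 + w.length := by
    simp; omega
  have hsplit : List.replicate ℓ true ++ false :: w
      = (List.replicate ℓ true ++ [false]) ++ w := by simp
  have hlen1 : (List.replicate ℓ true ++ [false]).length = ℓ + 1 := by simp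
  unfold parse
  rw [hidx, hlen]
  rw [if_pos (by omega)]
  congr 1
  have hgetD : ∀ j : ℕ, (List.replicate ℓ true ++ false :: w).getD (ℓ + 1 + j) false
      = w.getD j false := by
    intro j
    rw [hsplit, ← hlen1, getD_append_offset]
  congr 1
  · congr 1
    rw [List.map_congr_left (fun j _ => hgetD j)]
    exact range_map_getD w h
  · have h2 : ℓ + 1 + w.length - (2 * ℓ + 1) = w.length - ℓ := by omega
    rw [h2]
    have : ∀ j : ℕ, (List.replicate ℓ true ++ false :: w).getD (2 * ℓ + 1 + j) false
        = (w.drop ℓ).getD j false := by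
      intro j
      have : 2 * ℓ + 1 + j = (ℓ + 1) + (ℓ + j) := by omega
      rw [this, ← hlen1, hsplit, getD_append_offset]
      simp [List.getD, List.getElem?_drop]
    rw [List.map_congr_left (fun j _ => this j), range_map_getD (w.drop ℓ) (by simp),
        List.take_of_length_le (by simp)]

/-- decomposition of any string containing `false` -/
lemma decomp_of_mem_false (p : List Bool) (h : false ∈ p) :
    p = List.replicate (p.idxOf false) true ++ false :: p.drop (p.idxOf false + 1) := by
  induction p with
  | nil => simp at h
  | cons b p ih =>
    cases b with
    | false => simp [List.idxOf_cons]
    | true =>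
      have h' : false ∈ p := by simpa using h
      have : (true :: p).idxOf false = p.idxOf false + 1 := by
        simp [List.idxOf_cons]
      rw [this, List.replicate_succ]
      simpa using ih h'

lemma parse_shape {p : List Bool} {e : ℕ} {r : List Bool} (h : parse p = some (e, r)) :
    ∃ u : List Bool, p = List.replicate u.length true ++ false :: (u ++ r) ∧ e = unpad u := by
  by_cases hle : 2 * p.idxOf false + 1 ≤ p.length
  swap
  · have : parse p = none := by unfold parse; rw [if_neg hle]
    rw [this] at h; exact absurd h (by simp)
  set ℓ := p.idxOf false with hℓ
  have hmem : false ∈ p := by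
    by_contra hm
    have : ℓ = p.length := by
      rw [hℓ]; exact List.idxOf_eq_length_iff.mpr hm
    omega
  have hdec := decomp_of_mem_false p hmem
  rw [← hℓ] at hdec
  set z := p.drop (ℓ + 1) with hz
  have hzl : z.length ≥ ℓ := by
    have : p.length = ℓ + 1 + z.length := by
      conv_lhs => rw [hdec]
      simp; omega
    omega
  have hps := parse_spec ℓ z (by omega)
  rw [← hdec] at hps
  rw [hps] at h
  injection h with h'
  obtain ⟨he, hr⟩ := Prod.mk.injEq .. ▸ h'
  have hul : (z.take ℓ).length = ℓ := by
    rw [List.length_take]; omega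
  refine ⟨z.take ℓ, ?_, he.symm⟩
  rw [hul, ← hr, List.take_append_drop]
  exact hdec

/-- self-delimiting encoding of a natural number -/
def enc (e : ℕ) : List Bool :=
  List.replicate (Nat.size e) true ++ false :: pad e (Nat.size e)

lemma enc_length (e : ℕ) : (enc e).length = 2 * Nat.size e + 1 := by
  simp [enc]; omega

lemma parse_enc (e : ℕ) (r : List Bool) : parse (enc e ++ r) = some (e, r) := by
  have h : enc e ++ r
      = List.replicate (Nat.size e) true ++ false :: (pad e (Nat.size e) ++ r) := by
    simp [enc]
  rw [h, parse_spec _ _ (by simp)]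
  rw [List.take_append_of_le_length (by simp), List.take_of_length_le (by simp),
    List.drop_append_of_le_length (by simp), List.drop_of_length_le (by simp)]
  simp [unpad_pad (Nat.lt_size_self e)]

/-- prefix-freeness core lemma -/
lemma parse_prefix_free {p p' : List Bool} {e e' : ℕ} {r r' : List Bool}
    (h : parse p = some (e, r)) (h' : parse p' = some (e', r'))
    (hpre : p <+: p') (hlen : e = e' → r.length = r'.length) : p = p' := by
  obtain ⟨u, hp, he⟩ := parse_shape h
  obtain ⟨u', hp', he'⟩ := parse_shape h'
  obtain ⟨s, hs⟩ := hpre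
  -- first: u.length = u'.length
  have hll : u.length = u'.length := by
    by_contra hne
    rcases Nat.lt_or_ge u.length u'.length with hlt | hge
    · -- p'[u.length] is true (inside replicate), but p[u.length] = false
      have h1 : p'[u.length]? = some true := by
        rw [hp']
        rw [List.getElem?_append_left (by simp; omega)]
        simp [List.getElem?_replicate, hlt]
      have h2 : p[u.length]? = some false := by
        rw [hp]
        rw [List.getElem?_append_right (by simp)]
        simp
      rw [← hs, List.getElem?_append_left (by
        rw [hp]; simp; try omega)] at h1
      rw [h1] at h2; simp at h2
    · have hlt : u'.length < u.length := by omega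
      have h1 : p[u'.length]? = some true := by
        rw [hp]
        rw [List.getElem?_append_left (by simp; omega)]
        simp [List.getElem?_replicate, hlt]
      have h2 : p'[u'.length]? = some false := by
        rw [hp']
        rw [List.getElem?_append_right (by simp)]
        simp
      rw [← hs, List.getElem?_append_left (by
        rw [hp]; simp; try omega)] at h2
      rw [h1] at h2; simp at h2
  -- cancel the replicate and false
  have hca : u ++ (r ++ s) = u' ++ r' := by
    have h0 := hs
    rw [hp, hp', hll] at h0
    simp only [List.append_assoc, List.cons_append, List.nil_append] at h0
    have h1 := List.append_cancel_left h0
    exact (List.cons_inj_right _).mp h1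
  have huu : u = u' := List.append_inj_left hca hll
  have hee : e = e' := by rw [he, he', huu]
  have hrr : r ++ s = r' := List.append_inj_right hca hll
  have hs0 : s = [] := by
    have hr1 := hlen hee
    have hr2 : (r ++ s).length = r'.length := by rw [hrr]
    simp at hr2
    exact List.length_eq_zero_iff.mp (by omega)
  rw [hs0] at hs
  simpa using hs

lemma size_le_self (n : ℕ) : Nat.size n ≤ n := Nat.size_le.mpr (Nat.lt_two_pow_self (n := n))

lemma four_size_le (e : ℕ) : 4 * Nat.size e ≤ e + 28 := by
  have h1 : e / 4 + 1 ≤ 2 ^ (e / 4) := Nat.lt_two_pow_self (n := e / 4)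
  have h2 : (4 : ℕ) * 2 ^ (e / 4) = 2 ^ (e / 4 + 2) := by rw [pow_add]; ring
  have h3 : (2:ℕ) ^ (e / 4 + 2) ≤ 2 ^ ((e + 28) / 4) :=
    Nat.pow_le_pow_right (by norm_num) (by omega)
  have h4 : e < 2 ^ ((e + 28) / 4) := by omega
  have h5 : Nat.size e ≤ (e + 28) / 4 := Nat.size_le.mpr h4
  omega

lemma size_3add (e c : ℕ) : Nat.size (3 * e + c) ≤ Nat.size e + Nat.size c + 3 := by
  apply Nat.size_le.mpr
  have he := Nat.lt_size_self e
  have hc := Nat.lt_size_self c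
  have hX : 1 ≤ 2 ^ Nat.size e := Nat.one_le_two_pow
  have hY : 1 ≤ 2 ^ Nat.size c := Nat.one_le_two_pow
  have hX1 : 2 ^ Nat.size e ≤ 2 ^ Nat.size e * 2 ^ Nat.size c :=
    Nat.le_mul_of_pos_right _ (by positivity)
  have hY1 : 2 ^ Nat.size c ≤ 2 ^ Nat.size e * 2 ^ Nat.size c :=
    Nat.le_mul_of_pos_left _ (by positivity)
  have hrw : (2:ℕ) ^ (Nat.size e + Nat.size c + 3) = 2 ^ Nat.size e * 2 ^ Nat.size c * 8 := by
    rw [pow_add, pow_add]; norm_num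
  omega

lemma size_10add (a : ℕ) : Nat.size (10 * a + 40) ≤ a + 7 := by
  have h1 : 10 * a + 40 ≤ (a + 1) <<< 6 := by
    rw [Nat.shiftLeft_eq]; norm_num; omega
  have h2 : Nat.size ((a + 1) <<< 6) = Nat.size (a + 1) + 6 :=
    Nat.size_shiftLeft (by omega) 6
  have h3 := Nat.size_le_size h1
  have h4 := size_le_self (a + 1)
  omega

/-- length of the index field of the conditional machine -/
def dFun (a e : ℕ) : ℕ := e + 2 * Nat.size e + 10 * a + 40

lemma dFun_ge (a e : ℕ) : e + 2 * Nat.size (dFun a e) + 2 + a ≤ dFun a e := by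
  have h0 : dFun a e ≤ 3 * e + (10 * a + 40) := by
    have := size_le_self e; unfold dFun; omega
  have h1 : Nat.size (dFun a e) ≤ Nat.size e + Nat.size (10 * a + 40) + 3 :=
    le_trans (Nat.size_le_size h0) (size_3add e _)
  have h2 := size_10add a
  unfold dFun at *
  omega

lemma dFun_budget (a e : ℕ) :
    (2 * Nat.size e + 1) + (dFun a e + 1) ≤ 2 * e + (10 * a + 70) := by
  have := four_size_le e
  unfold dFun
  omega

open Nat.Partrec (Code)
open Nat.Partrec.Code

/-- stage-`t` approximation of the graph of the machine coded by `c` -/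
def stageList (c : Code) (t : ℕ) : List (List Bool × List Bool) :=
  (List.range t).filterMap fun j =>
    (evaln t c j).bind fun v =>
      (Encodable.decode (α := List Bool) j).bind fun q =>
        (Encodable.decode (α := List Bool) v).map fun x => (q, x)

lemma stageList_mono {c : Code} {t t' : ℕ} (h : t ≤ t') {qx : List Bool × List Bool}
    (hm : qx ∈ stageList c t) : qx ∈ stageList c t' := by
  rw [stageList, List.mem_filterMap] at hm ⊢
  obtain ⟨j, hj, he⟩ := hm
  refine ⟨j, List.mem_range.mpr (lt_of_lt_of_le (List.mem_range.mp hj) h), ?_⟩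
  rcases ho : evaln t c j with _ | v
  · rw [ho] at he; simp at he
  · rw [ho] at he
    rw [evaln_mono h ho]
    exact he

/-- the `dl` step function: add new outputs (of length `no - 1` if `no ≠ 0`,
arbitrary if `no = 0`) produced by programs of length `≤ m`. -/
def dlStep (no m : ℕ) (acc : List (List Bool)) (qx : List Bool × List Bool) :
    List (List Bool) :=
  if (no = 0 ∨ qx.2.length + 1 = no) ∧ qx.1.length ≤ m ∧ qx.2 ∉ acc then acc ++ [qx.2]
  else acc

/-- enumeration (in order of appearance, without repetition) of the strings
(of length `no - 1`, if `no ≠ 0`) having a description of length `≤ m`. -/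
def dl (c : Code) (no m : ℕ) : ℕ → List (List Bool)
  | 0 => []
  | t + 1 => (stageList c (t + 1)).foldl (dlStep no m) (dl c no m t)

lemma dlStep_prefix (no m : ℕ) (acc : List (List Bool)) (qx) :
    acc <+: dlStep no m acc qx := by
  unfold dlStep
  split <;> simp

lemma foldl_dlStep_prefix (no m : ℕ) (l : List (List Bool × List Bool)) (acc) :
    acc <+: l.foldl (dlStep no m) acc := by
  induction l generalizing acc with
  | nil => simp
  | cons qx l ih => exact (dlStep_prefix no m acc qx).trans (ih _)

lemma dl_prefix (c : Code) (no m : ℕ) {t t' : ℕ} (h : t ≤ t') :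
    dl c no m t <+: dl c no m t' := by
  induction t' with
  | zero => simpa [Nat.le_zero.mp h]
  | succ t' ih =>
    rcases Nat.lt_or_ge t (t' + 1) with h' | h'
    · exact (ih (by omega)).trans (foldl_dlStep_prefix _ _ _ _)
    · have : t = t' + 1 := by omega
      subst this; rfl

lemma foldl_dlStep_mem {no m : ℕ} {l : List (List Bool × List Bool)} {acc x}
    (hx : x ∈ l.foldl (dlStep no m) acc) :
    x ∈ acc ∨ ∃ q, (q, x) ∈ l ∧ (no = 0 ∨ x.length + 1 = no) ∧ q.length ≤ m := by
  induction l generalizing acc with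
  | nil => exact Or.inl hx
  | cons qx l ih =>
    rcases ih hx with h | ⟨q, hq, h1, h2⟩
    · unfold dlStep at h
      split at h
      · rcases List.mem_append.mp h with h' | h'
        · exact Or.inl h'
        · simp at h'
          subst h'
          exact Or.inr ⟨qx.1, by simp, by tauto⟩
      · exact Or.inl h
    · exact Or.inr ⟨q, by simp [hq], h1, h2⟩

lemma dl_sound {c : Code} {no m t : ℕ} {x} (hx : x ∈ dl c no m t) :
    ∃ q, (q, x) ∈ stageList c t ∧ (no = 0 ∨ x.length + 1 = no) ∧ q.length ≤ m := by
  induction t with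
  | zero => simp [dl] at hx
  | succ t ih =>
    rcases foldl_dlStep_mem hx with h | ⟨q, hq, h1, h2⟩
    · obtain ⟨q, hq, h1, h2⟩ := ih h
      exact ⟨q, stageList_mono (Nat.le_succ t) hq, h1, h2⟩
    · exact ⟨q, hq, h1, h2⟩

lemma mem_of_prefix {α : Type*} {l l' : List α} (h : l <+: l') {x : α} (hx : x ∈ l) :
    x ∈ l' := h.subset hx

lemma foldl_dlStep_complete {no m : ℕ} {l : List (List Bool × List Bool)} {acc q x}
    (hmem : (q, x) ∈ l) (h1 : no = 0 ∨ x.length + 1 = no) (h2 : q.length ≤ m) :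
    x ∈ l.foldl (dlStep no m) acc := by
  induction l generalizing acc with
  | nil => simp at hmem
  | cons qx l ih =>
    rcases List.mem_cons.mp hmem with h | h
    · have hx : x ∈ dlStep no m acc qx := by
        unfold dlStep
        rw [← h]
        split
        · simp
        · rename_i hcond
          simp only [not_and, not_or, Decidable.not_not] at hcond
          by_cases hin : x ∈ acc
          · exact hin
          · exfalso; exact hin (by tauto)
      exact mem_of_prefix (foldl_dlStep_prefix no m l (dlStep no m acc qx)) hx
    · exact ih h

lemma dl_complete {c : Code} {no m t : ℕ} {q x}
    (hmem : (q, x) ∈ stageList c (t + 1)) (h1 : no = 0 ∨ x.length + 1 = no)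
    (h2 : q.length ≤ m) : x ∈ dl c no m (t + 1) :=
  foldl_dlStep_complete hmem h1 h2

lemma foldl_dlStep_nodup {no m : ℕ} {l : List (List Bool × List Bool)} {acc}
    (h : acc.Nodup) : (l.foldl (dlStep no m) acc).Nodup := by
  induction l generalizing acc with
  | nil => exact h
  | cons qx l ih =>
    apply ih
    unfold dlStep
    split
    · rename_i hcond
      rw [List.nodup_append]
      refine ⟨h, List.nodup_singleton _, fun b hb b' hb' hbb' => ?_⟩
      simp at hb'; subst hb'; subst hbb'; exact hcond.2.2 hb
    · exact h

lemma dl_nodup (c : Code) (no m t : ℕ) : (dl c no m t).Nodup := by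
  induction t with
  | zero => simp [dl]
  | succ t ih => exact foldl_dlStep_nodup ih

lemma get?_of_prefix {α : Type*} {l l' : List α} (h : l <+: l') {i : ℕ} {v : α}
    (hv : l[i]? = some v) : l'[i]? = some v := by
  obtain ⟨s, rfl⟩ := h
  obtain ⟨hlt, -⟩ := List.getElem?_eq_some_iff.mp hv
  rw [List.getElem?_append_left hlt]
  exact hv

/-- number of strings of length `nn` enumerated so far -/
def cnt (c : Code) (m t nn : ℕ) : ℕ :=
  (dl c 0 m t).countP fun z => z.length = nn

lemma countP_prefix {α : Type*} {l l' : List α} (h : l <+: l') (p : α → Bool) :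
    l.countP p ≤ l'.countP p := by
  obtain ⟨s, rfl⟩ := h
  rw [List.countP_append]
  omega

lemma cnt_mono (c : Code) (m nn : ℕ) {t t' : ℕ} (h : t ≤ t') :
    cnt c m t nn ≤ cnt c m t' nn :=
  countP_prefix (dl_prefix c 0 m h) _

def qlStep (c : Code) (d m t : ℕ) (acc : List ℕ) (z : List Bool) : List ℕ :=
  if z.length ∉ acc ∧ 2 ^ (d + 1) ≤ cnt c m t z.length then acc ++ [z.length] else acc

/-- enumeration of the lengths `nn` such that at least `2^(d+1)` strings of
length `nn` with descriptions of length `≤ m` have appeared -/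
def ql (c : Code) (d m : ℕ) : ℕ → List ℕ
  | 0 => []
  | t + 1 => (dl c 0 m (t + 1)).foldl (qlStep c d m (t + 1)) (ql c d m t)

lemma qlStep_prefix (c : Code) (d m t : ℕ) (acc z) : acc <+: qlStep c d m t acc z := by
  unfold qlStep; split <;> simp

lemma foldl_qlStep_prefix (c : Code) (d m t : ℕ) (l : List (List Bool)) (acc) :
    acc <+: l.foldl (qlStep c d m t) acc := by
  induction l generalizing acc with
  | nil => simp
  | cons z l ih => exact (qlStep_prefix c d m t acc z).trans (ih _)

lemma ql_prefix (c : Code) (d m : ℕ) {t t' : ℕ} (h : t ≤ t') :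
    ql c d m t <+: ql c d m t' := by
  induction t' with
  | zero => simp [Nat.le_zero.mp h]
  | succ t' ih =>
    rcases Nat.lt_or_ge t (t' + 1) with h' | h'
    · exact (ih (by omega)).trans (foldl_qlStep_prefix _ _ _ _ _ _)
    · have : t = t' + 1 := by omega
      subst this; rfl

lemma foldl_qlStep_mem {c : Code} {d m t : ℕ} {l : List (List Bool)} {acc nn}
    (h : nn ∈ l.foldl (qlStep c d m t) acc) :
    nn ∈ acc ∨ 2 ^ (d + 1) ≤ cnt c m t nn := by
  induction l generalizing acc with
  | nil => exact Or.inl h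
  | cons z l ih =>
    rcases ih h with h' | h'
    · unfold qlStep at h'
      split at h'
      · rcases List.mem_append.mp h' with h'' | h''
        · exact Or.inl h''
        · simp at h''
          subst h''
          rename_i hcond
          exact Or.inr hcond.2
      · exact Or.inl h'
    · exact Or.inr h'

lemma ql_sound {c : Code} {d m t : ℕ} {nn} (h : nn ∈ ql c d m t) :
    2 ^ (d + 1) ≤ cnt c m t nn := by
  induction t with
  | zero => simp [ql] at h
  | succ t ih =>
    rcases foldl_qlStep_mem h with h' | h'
    · exact le_trans (ih h') (cnt_mono c m nn (Nat.le_succ t))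
    · exact h'

lemma foldl_qlStep_complete {c : Code} {d m t : ℕ} {l : List (List Bool)} {acc z}
    (hz : z ∈ l) (hc : 2 ^ (d + 1) ≤ cnt c m t z.length) :
    z.length ∈ l.foldl (qlStep c d m t) acc := by
  induction l generalizing acc with
  | nil => simp at hz
  | cons w l ih =>
    rcases List.mem_cons.mp hz with h | h
    · have hx : z.length ∈ qlStep c d m t acc w := by
        unfold qlStep
        rw [← h]
        split
        · simp
        · rename_i hcond
          simp only [not_and, Decidable.not_not] at hcond
          by_cases hin : z.length ∈ acc
          · exact hin
          · exact absurd (hcond hin) (by omega)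
      exact mem_of_prefix (foldl_qlStep_prefix c d m t l _) hx
    · exact ih h

lemma ql_complete {c : Code} {d m t : ℕ} {z}
    (hz : z ∈ dl c 0 m (t + 1)) (hc : 2 ^ (d + 1) ≤ cnt c m (t + 1) z.length) :
    z.length ∈ ql c d m (t + 1) :=
  foldl_qlStep_complete hz hc

lemma foldl_qlStep_nodup {c : Code} {d m t : ℕ} {l : List (List Bool)} {acc : List ℕ}
    (h : acc.Nodup) : (l.foldl (qlStep c d m t) acc).Nodup := by
  induction l generalizing acc with
  | nil => exact h
  | cons z l ih =>
    apply ih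
    unfold qlStep
    split
    · rename_i hcond
      rw [List.nodup_append]
      refine ⟨h, List.nodup_singleton _, fun b hb b' hb' hbb' => ?_⟩
      simp at hb'; subst hb'; subst hbb'; exact hcond.1 hb
    · exact h

lemma ql_nodup (c : Code) (d m t : ℕ) : (ql c d m t).Nodup := by
  induction t with
  | zero => simp [ql]
  | succ t ih => exact foldl_qlStep_nodup ih

/-- uniqueness of the `2^ℓ + i` representation -/
lemma two_pow_add_inj {l l' i i' : ℕ} (hi : i < 2 ^ l) (hi' : i' < 2 ^ l')
    (h : 2 ^ l + i = 2 ^ l' + i') : l = l' ∧ i = i' := by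
  have hll : l = l' := by
    by_contra hne
    rcases Nat.lt_or_ge l l' with hlt | hge
    · have : 2 ^ (l + 1) ≤ 2 ^ l' := Nat.pow_le_pow_right (by norm_num) (by omega)
      rw [pow_succ] at this
      omega
    · have hlt : l' < l := by omega
      have : 2 ^ (l' + 1) ≤ 2 ^ l := Nat.pow_le_pow_right (by norm_num) (by omega)
      rw [pow_succ] at this
      omega
  subst hll
  exact ⟨rfl, by omega⟩

/-- a nodup list of distinct strings each having a "description" of length at
most `m` under an injective-valued assignment has fewer than `2^(m+1)` elements -/
lemma nodup_bound_of_desc {L : List (List Bool)} (hN : L.Nodup) {m : ℕ}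
    (φ : List Bool → List Bool) (hφlen : ∀ x ∈ L, (φ x).length ≤ m)
    (hφinj : ∀ x ∈ L, ∀ y ∈ L, φ x = φ y → x = y) : L.length < 2 ^ (m + 1) := by
  set ψ : List Bool → ℕ := fun x => 2 ^ (φ x).length + unpad (φ x) with hψ
  have hmapN : (L.map ψ).Nodup := by
    refine hN.map_on fun x hx y hy hxy => ?_
    have h1 := unpad_lt (φ x)
    have h2 := unpad_lt (φ y)
    obtain ⟨hl, hu⟩ := two_pow_add_inj h1 h2 hxy
    exact hφinj x hx y hy (unpad_inj hl hu)
  have hsub : (L.map ψ).toFinset ⊆ Finset.Ico 1 (2 ^ (m + 1)) := by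
    intro v hv
    rw [List.mem_toFinset, List.mem_map] at hv
    obtain ⟨x, hx, rfl⟩ := hv
    rw [Finset.mem_Ico]
    constructor
    · have : 1 ≤ 2 ^ (φ x).length := Nat.one_le_two_pow
      simp only [hψ]; omega
    · have h1 : unpad (φ x) < 2 ^ (φ x).length := unpad_lt _
      have h2 : 2 ^ ((φ x).length + 1) ≤ 2 ^ (m + 1) :=
        Nat.pow_le_pow_right (by norm_num) (by have := hφlen x hx; omega)
      rw [pow_succ] at h2
      simp only [hψ]; omega
  have h1 : (L.map ψ).toFinset.card = L.length := by
    rw [List.toFinset_card_of_nodup hmapN, List.length_map]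
  have h2 := Finset.card_le_card hsub
  rw [h1, Nat.card_Ico] at h2
  have : 1 ≤ 2 ^ (m + 1) := Nat.one_le_two_pow
  omega

/-- count of the complement -/
lemma countP_not_add {α : Type*} (p : α → Bool) (L : List α) :
    L.countP p + L.countP (fun z => !p z) = L.length := by
  induction L with
  | nil => simp
  | cons x L ih =>
    rw [List.countP_cons, List.countP_cons]
    cases hx : p x <;> simp [hx] <;> omega

/-- sum over distinct lengths of counts is at most the total length -/
lemma sum_countP_le {K : List ℕ} (hK : K.Nodup) (L : List (List Bool)) :
    (K.map fun nn => L.countP fun z => z.length = nn).sum ≤ L.length := by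
  induction K generalizing L with
  | nil => simp
  | cons nn₀ K ih =>
    have hK' : K.Nodup := hK.of_cons
    have hnn₀ : nn₀ ∉ K := (List.nodup_cons.mp hK).1
    set p₀ : List Bool → Bool := fun z => decide (z.length = nn₀) with hp₀
    set L' := L.filter (fun z => !p₀ z) with hL'
    have hne : ∀ nn ∈ K, nn ≠ nn₀ := fun nn h hh => hnn₀ (hh ▸ h)
    have hmapeq : (K.map fun nn => L.countP fun z => z.length = nn)
        = K.map fun nn => L'.countP fun z => z.length = nn := by
      apply List.map_congr_left
      intro nn hnn
      rw [hL', List.countP_filter]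
      apply List.countP_congr
      intro z _
      rcases eq_or_ne z.length nn₀ with hz | hz
      · have hzn : z.length ≠ nn := by
          rw [hz]; exact (hne nn hnn).symm
        simp only [hp₀, hz]
        simp [(hne nn hnn).symm]
      · simp [hp₀, hz]
    rw [List.map_cons, List.sum_cons, hmapeq]
    have h1 := ih hK' L'
    have h2 : L'.length = L.countP (fun z => !p₀ z) := by
      rw [hL', List.countP_eq_length_filter]
    have h3 := countP_not_add p₀ L
    have h4 : L.countP (fun z => decide (z.length = nn₀)) = L.countP p₀ := by rw [hp₀]
    omega

lemma length_mul_le_sum {l : List ℕ} {b : ℕ} (h : ∀ x ∈ l, b ≤ x) :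
    l.length * b ≤ l.sum := by
  induction l with
  | nil => simp
  | cons x l ih =>
    simp only [List.length_cons, List.sum_cons]
    have h1 := h x (by simp)
    have h2 := ih fun y hy => h y (by simp [hy])
    rw [Nat.succ_mul]
    omega

/-- the main cardinality bound for `ql` -/
lemma ql_length_bound (c : Code) (d m t : ℕ) :
    (ql c d m t).length * 2 ^ (d + 1) ≤ (dl c 0 m t).length := by
  have h1 : ∀ nn ∈ ql c d m t, 2 ^ (d + 1) ≤ (dl c 0 m t).countP fun z => z.length = nn :=
    fun nn hnn => ql_sound hnn
  have h2 : ((ql c d m t).map fun nn => (dl c 0 m t).countP fun z => z.length = nn).sum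
      ≤ (dl c 0 m t).length := sum_countP_le (ql_nodup c d m t) _
  have h3 : (ql c d m t).length * 2 ^ (d + 1)
      ≤ ((ql c d m t).map fun nn => (dl c 0 m t).countP fun z => z.length = nn).sum := by
    have := length_mul_le_sum (l := (ql c d m t).map fun nn =>
      (dl c 0 m t).countP fun z => z.length = nn) (b := 2 ^ (d + 1)) (by
        intro x hx
        rw [List.mem_map] at hx
        obtain ⟨nn, hnn, rfl⟩ := hx
        exact h1 nn hnn)
    simpa using this
  omega

section Computability

open Primrec

lemma pow2_primrec : Primrec (fun n => 2 ^ n : ℕ → ℕ) := by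
  have h : Primrec (fun t => Nat.rec (motive := fun _ => ℕ) 1 (fun _ ih => 2 * ih) t) :=
    Primrec.nat_rec₁ 1 ((nat_mul.comp (const 2) snd).to₂)
  exact h.of_eq fun n => by
    induction n with
    | zero => rfl
    | succ n ih =>
      have hr : Nat.rec (motive := fun _ => ℕ) 1 (fun _ ih => 2 * ih) (n + 1)
          = 2 * Nat.rec (motive := fun _ => ℕ) 1 (fun _ ih => 2 * ih) n := rfl
      rw [hr, ih, pow_succ]
      ring

lemma unpad_primrec : Primrec unpad := by
  have h : Primrec (fun l : List Bool =>
      l.foldr (fun b n => 2 * n + cond b 1 0) 0) :=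
    Primrec.list_foldr .id (const 0) <|
      ((nat_add.comp (nat_mul.comp (const 2) (snd.comp snd))
        (Primrec.cond (fst.comp snd) (const 1) (const 0))).to₂)
  exact h.of_eq fun l => rfl

lemma pad_primrec : Primrec₂ pad := by
  have hinner : Primrec (fun x : (ℕ × ℕ) × ℕ => decide (x.1.1 / 2 ^ x.2 % 2 = 1)) := by
    have harg : Primrec (fun x : (ℕ × ℕ) × ℕ => x.1.1 / 2 ^ x.2 % 2) :=
      nat_mod.comp (nat_div.comp (fst.comp fst) (pow2_primrec.comp snd)) (const 2)
    exact (PrimrecRel.comp Primrec.eq harg (const 1)).decide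
  have h : Primrec (fun x : ℕ × ℕ =>
      (List.range x.2).map fun j => decide (x.1 / 2 ^ j % 2 = 1)) :=
    Primrec.list_map (Primrec.list_range.comp snd) hinner.to₂
  exact h.to₂

lemma countP_eq_foldl {α : Type*} (p : α → Bool) (l : List α) :
    l.countP p = l.foldl (fun k z => if p z then k + 1 else k) 0 := by
  suffices h : ∀ k, l.foldl (fun k z => if p z then k + 1 else k) k = k + l.countP p by
    simpa using (h 0).symm
  induction l with
  | nil => simp
  | cons x l ih =>
    intro k
    rw [List.foldl_cons, List.countP_cons, ih]
    by_cases hx : p x <;> simp [hx] <;> omega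

lemma size_eq_countP (n : ℕ) :
    Nat.size n = (List.range (n + 1)).countP fun k => 2 ^ k ≤ n := by
  have hiff : ∀ k, (2 ^ k ≤ n) ↔ k < Nat.size n := by
    intro k
    rw [← not_iff_not]
    push_neg
    rw [← Nat.size_le]
  have hcong : ((List.range (n + 1)).countP fun k => 2 ^ k ≤ n)
      = (List.range (n + 1)).countP fun k => k < Nat.size n := by
    apply List.countP_congr
    intro k _
    simp [hiff k]
  rw [hcong]
  have hgen : ∀ m s : ℕ, ((List.range m).countP fun k => k < s) = min s m := by
    intro m s
    induction m with
    | zero => simp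
    | succ m ih =>
      rw [List.range_succ, List.countP_append, ih]
      by_cases h : m < s <;> simp [h] <;> omega
  rw [hgen]
  have : Nat.size n ≤ n := size_le_self n
  omega

lemma size_primrec : Primrec Nat.size := by
  have hstep : Primrec₂ (fun (n : ℕ) (p : ℕ × ℕ) =>
      if decide (2 ^ p.2 ≤ n) = true then p.1 + 1 else p.1) :=
    (Primrec.ite
      (PrimrecRel.comp Primrec.eq
        (PrimrecPred.decide (nat_le.comp (pow2_primrec.comp (snd.comp snd)) fst))
        (const true))
      (Primrec.succ.comp (fst.comp snd)) (fst.comp snd)).to₂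
  have h2 : Primrec (fun n => (List.range (n + 1)).foldl
      (fun k z => if decide (2 ^ z ≤ n) = true then k + 1 else k) 0) :=
    Primrec.list_foldl (Primrec.list_range.comp Primrec.succ) (const 0) hstep
  exact h2.of_eq fun n => by
    rw [size_eq_countP n, countP_eq_foldl]

lemma parse_primrec : Primrec parse := by
  have hidx : Primrec (fun p : List Bool => List.idxOf false p) :=
    Primrec.list_idxOf.comp (const false) .id
  have hlen : Primrec (fun p : List Bool => p.length) := Primrec.list_length
  have hA : Primrec (fun p : List Bool =>
      (List.range (List.idxOf false p)).map
        fun j => p.getD (List.idxOf false p + 1 + j) false) :=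
    Primrec.list_map (Primrec.list_range.comp hidx)
      (((Primrec.list_getD false).comp fst
        (nat_add.comp (Primrec.succ.comp (hidx.comp fst)) snd)).to₂)
  have hB : Primrec (fun p : List Bool =>
      (List.range (p.length - (2 * List.idxOf false p + 1))).map
        fun j => p.getD (2 * List.idxOf false p + 1 + j) false) :=
    Primrec.list_map
      (Primrec.list_range.comp
        (nat_sub.comp hlen (Primrec.succ.comp (nat_mul.comp (const 2) hidx))))
      (((Primrec.list_getD false).comp fst
        (nat_add.comp (Primrec.succ.comp
          (nat_mul.comp (const 2) (hidx.comp fst))) snd)).to₂)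
  have hcond : PrimrecPred (fun p : List Bool => 2 * List.idxOf false p + 1 ≤ p.length) :=
    nat_le.comp (Primrec.succ.comp (nat_mul.comp (const 2) hidx)) hlen
  have h : Primrec (fun p : List Bool =>
      if 2 * List.idxOf false p + 1 ≤ p.length then
        some (unpad ((List.range (List.idxOf false p)).map
            fun j => p.getD (List.idxOf false p + 1 + j) false),
          (List.range (p.length - (2 * List.idxOf false p + 1))).map
            fun j => p.getD (2 * List.idxOf false p + 1 + j) false)
      else none) :=
    Primrec.ite hcond
      (Primrec.option_some.comp (Primrec.pair (unpad_primrec.comp hA) hB))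
      (const none)
  exact h.of_eq fun p => by rw [parse]

end Computability

section Computability2

open Primrec

lemma primrecPred_mem {β : Type*} [Primcodable β]
    {f : β → List Bool} {g : β → List (List Bool)} (hf : Primrec f) (hg : Primrec g) :
    PrimrecPred fun b => f b ∈ g b :=
  PrimrecPred.of_eq
    (nat_lt.comp (Primrec.list_idxOf.comp hf hg) (Primrec.list_length.comp hg))
    fun b => by
      exact @List.idxOf_lt_length_iff _ instBEqOfDecidableEq _ _ _

lemma stageList_primrec (c : Nat.Partrec.Code) : Primrec (stageList c) := by
  have hev : Primrec fun x : ℕ × ℕ => evaln x.1 c x.2 :=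
    primrec_evaln.comp (Primrec.pair (Primrec.pair fst (const c)) snd)
  have hg4 : Primrec fun z : (((ℕ × ℕ) × ℕ) × List Bool) × List Bool => (z.1.2, z.2) :=
    Primrec.pair (snd.comp fst) snd
  have hg3 : Primrec fun y : ((ℕ × ℕ) × ℕ) × List Bool =>
      (Encodable.decode (α := List Bool) y.1.2).map fun x => (y.2, x) :=
    Primrec.option_map (Primrec.decode.comp (snd.comp fst)) hg4.to₂
  have hg2 : Primrec fun w : (ℕ × ℕ) × ℕ =>
      (Encodable.decode (α := List Bool) w.1.2).bind fun q =>
        (Encodable.decode (α := List Bool) w.2).map fun x => (q, x) :=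
    Primrec.option_bind (Primrec.decode.comp (snd.comp fst)) hg3.to₂
  have hg : Primrec fun x : ℕ × ℕ =>
      (evaln x.1 c x.2).bind fun v =>
        (Encodable.decode (α := List Bool) x.2).bind fun q =>
          (Encodable.decode (α := List Bool) v).map fun xx => (q, xx) :=
    Primrec.option_bind hev hg2.to₂
  have h : Primrec fun t : ℕ =>
      (List.range t).filterMap fun j =>
        (evaln t c j).bind fun v =>
          (Encodable.decode (α := List Bool) j).bind fun q =>
            (Encodable.decode (α := List Bool) v).map fun x => (q, x) :=
    Primrec.listFilterMap Primrec.list_range hg.to₂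
  exact h.of_eq fun t => by rw [stageList]

lemma dlStep_primrec : Primrec fun z : (ℕ × ℕ) × (List (List Bool) × (List Bool × List Bool)) =>
    dlStep z.1.1 z.1.2 z.2.1 z.2.2 := by
  have hno : Primrec fun z : (ℕ × ℕ) × (List (List Bool) × (List Bool × List Bool)) => z.1.1 :=
    fst.comp fst
  have hm : Primrec fun z : (ℕ × ℕ) × (List (List Bool) × (List Bool × List Bool)) => z.1.2 :=
    snd.comp fst
  have hacc : Primrec fun z : (ℕ × ℕ) × (List (List Bool) × (List Bool × List Bool)) => z.2.1 :=
    fst.comp snd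
  have hq : Primrec fun z : (ℕ × ℕ) × (List (List Bool) × (List Bool × List Bool)) => z.2.2.1 :=
    fst.comp (snd.comp snd)
  have hx : Primrec fun z : (ℕ × ℕ) × (List (List Bool) × (List Bool × List Bool)) => z.2.2.2 :=
    snd.comp (snd.comp snd)
  have hP : PrimrecPred fun z : (ℕ × ℕ) × (List (List Bool) × (List Bool × List Bool)) =>
      (z.1.1 = 0 ∨ z.2.2.2.length + 1 = z.1.1) ∧ z.2.2.1.length ≤ z.1.2 ∧ z.2.2.2 ∉ z.2.1 := by
    apply PrimrecPred.and
    · apply PrimrecPred.or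
      · exact PrimrecRel.comp Primrec.eq hno (const 0)
      · exact PrimrecRel.comp Primrec.eq (Primrec.succ.comp (Primrec.list_length.comp hx)) hno
    · apply PrimrecPred.and
      · exact nat_le.comp (Primrec.list_length.comp hq) hm
      · exact PrimrecPred.not (primrecPred_mem hx hacc)
  have h := Primrec.ite hP (Primrec.list_concat.comp hacc hx) hacc
  exact h.of_eq fun z => by
    unfold dlStep
    by_cases hc : (z.1.1 = 0 ∨ z.2.2.2.length + 1 = z.1.1)
        ∧ z.2.2.1.length ≤ z.1.2 ∧ z.2.2.2 ∉ z.2.1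
    · rw [if_pos hc]
    · rw [if_neg hc]

attribute [irreducible] dlStep

lemma dl_primrec (c : Nat.Partrec.Code) :
    Primrec fun x : (ℕ × ℕ) × ℕ => dl c x.1.1 x.1.2 x.2 := by
  have hh2 : Primrec fun z : (((ℕ × ℕ) × ℕ) × (ℕ × List (List Bool)))
      × (List (List Bool) × (List Bool × List Bool)) =>
      dlStep z.1.1.1.1 z.1.1.1.2 z.2.1 z.2.2 :=
    dlStep_primrec.comp (Primrec.pair (fst.comp (fst.comp fst)) snd)
  have hh : Primrec₂ fun (x : (ℕ × ℕ) × ℕ) (p : ℕ × List (List Bool)) =>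
      (stageList c (p.1 + 1)).foldl (dlStep x.1.1 x.1.2) p.2 :=
    Primrec.list_foldl
      ((stageList_primrec c).comp (Primrec.succ.comp (fst.comp snd)))
      (snd.comp snd) hh2.to₂
  have heq : ∀ (no m t : ℕ), dl c no m t
      = Nat.rec (motive := fun _ => List (List Bool)) []
          (fun y IH => (stageList c (y + 1)).foldl (dlStep no m) IH) t := by
    intro no m t
    induction t with
    | zero => rfl
    | succ t ih =>
      show dl c no m (t + 1) = (stageList c (t + 1)).foldl (dlStep no m) _
      rw [dl, ih]
  have h := Primrec.nat_rec' (f := fun x : (ℕ × ℕ) × ℕ => x.2)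
    (g := fun _ => ([] : List (List Bool))) snd (const []) hh
  exact h.of_eq fun x => (heq x.1.1 x.1.2 x.2).symm

lemma cnt_primrec (c : Nat.Partrec.Code) :
    Primrec fun x : (ℕ × ℕ) × ℕ => cnt c x.1.1 x.1.2 x.2 := by
  have hdlx : Primrec fun x : (ℕ × ℕ) × ℕ => dl c 0 x.1.1 x.1.2 :=
    (dl_primrec c).comp (Primrec.pair (Primrec.pair (const 0) (fst.comp fst)) (snd.comp fst))
  have hstep : Primrec₂ fun (x : (ℕ × ℕ) × ℕ) (p : ℕ × List Bool) =>
      if decide (p.2.length = x.2) = true then p.1 + 1 else p.1 :=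
    (Primrec.ite
      (PrimrecRel.comp Primrec.eq
        (PrimrecPred.decide (PrimrecRel.comp Primrec.eq (Primrec.list_length.comp (snd.comp snd))
          (snd.comp fst)))
        (const true))
      (Primrec.succ.comp (fst.comp snd)) (fst.comp snd)).to₂
  have h : Primrec fun x : (ℕ × ℕ) × ℕ =>
      (dl c 0 x.1.1 x.1.2).foldl
        (fun k z => if decide (z.length = x.2) = true then k + 1 else k) 0 :=
    Primrec.list_foldl hdlx (const 0) hstep
  exact h.of_eq fun x => by
    rw [cnt, countP_eq_foldl]

lemma qlStep_primrec (c : Nat.Partrec.Code) :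
    Primrec fun z : ((ℕ × ℕ) × ℕ) × (List ℕ × List Bool) =>
      qlStep c z.1.1.1 z.1.1.2 z.1.2 z.2.1 z.2.2 := by
  have hd : Primrec fun z : ((ℕ × ℕ) × ℕ) × (List ℕ × List Bool) => z.1.1.1 :=
    fst.comp (fst.comp fst)
  have hm : Primrec fun z : ((ℕ × ℕ) × ℕ) × (List ℕ × List Bool) => z.1.1.2 :=
    snd.comp (fst.comp fst)
  have ht : Primrec fun z : ((ℕ × ℕ) × ℕ) × (List ℕ × List Bool) => z.1.2 :=
    snd.comp fst
  have hacc : Primrec fun z : ((ℕ × ℕ) × ℕ) × (List ℕ × List Bool) => z.2.1 :=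
    fst.comp snd
  have hz : Primrec fun z : ((ℕ × ℕ) × ℕ) × (List ℕ × List Bool) => z.2.2 :=
    snd.comp snd
  have hlen : Primrec fun z : ((ℕ × ℕ) × ℕ) × (List ℕ × List Bool) => z.2.2.length :=
    Primrec.list_length.comp hz
  have hmemP : PrimrecPred fun z : ((ℕ × ℕ) × ℕ) × (List ℕ × List Bool) =>
      z.2.2.length ∈ z.2.1 :=
    PrimrecPred.of_eq
      (nat_lt.comp (Primrec.list_idxOf.comp hlen hacc) (Primrec.list_length.comp hacc))
      fun z => by
        exact List.idxOf_lt_length_iff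
  have hcntP : Primrec fun z : ((ℕ × ℕ) × ℕ) × (List ℕ × List Bool) =>
      cnt c z.1.1.2 z.1.2 z.2.2.length :=
    (cnt_primrec c).comp (Primrec.pair (Primrec.pair hm ht) hlen)
  have hP : PrimrecPred fun z : ((ℕ × ℕ) × ℕ) × (List ℕ × List Bool) =>
      z.2.2.length ∉ z.2.1 ∧ 2 ^ (z.1.1.1 + 1) ≤ cnt c z.1.1.2 z.1.2 z.2.2.length :=
    PrimrecPred.and (PrimrecPred.not hmemP)
      (nat_le.comp (pow2_primrec.comp (Primrec.succ.comp hd)) hcntP)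
  have h := Primrec.ite hP (Primrec.list_concat.comp hacc hlen) hacc
  exact h.of_eq fun z => by
    unfold qlStep
    by_cases hc : z.2.2.length ∉ z.2.1 ∧ 2 ^ (z.1.1.1 + 1) ≤ cnt c z.1.1.2 z.1.2 z.2.2.length
    · rw [if_pos hc]
    · rw [if_neg hc]

attribute [irreducible] qlStep

lemma ql_primrec (c : Nat.Partrec.Code) :
    Primrec fun x : (ℕ × ℕ) × ℕ => ql c x.1.1 x.1.2 x.2 := by
  have hh2 : Primrec fun z : (((ℕ × ℕ) × ℕ) × (ℕ × List ℕ)) × (List ℕ × List Bool) =>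
      qlStep c z.1.1.1.1 z.1.1.1.2 (z.1.2.1 + 1) z.2.1 z.2.2 :=
    (qlStep_primrec c).comp
      (Primrec.pair
        (Primrec.pair (fst.comp (fst.comp fst))
          (Primrec.succ.comp (fst.comp (snd.comp fst)))) snd)
  have hh : Primrec₂ fun (x : (ℕ × ℕ) × ℕ) (p : ℕ × List ℕ) =>
      (dl c 0 x.1.2 (p.1 + 1)).foldl (qlStep c x.1.1 x.1.2 (p.1 + 1)) p.2 :=
    Primrec.list_foldl
      ((dl_primrec c).comp
        (Primrec.pair (Primrec.pair (const 0) (snd.comp (fst.comp fst)))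
          (Primrec.succ.comp (fst.comp snd))))
      (snd.comp snd) hh2.to₂
  have heq : ∀ (d m t : ℕ), ql c d m t
      = Nat.rec (motive := fun _ => List ℕ) []
          (fun y IH => (dl c 0 m (y + 1)).foldl (qlStep c d m (y + 1)) IH) t := by
    intro d m t
    induction t with
    | zero => rfl
    | succ t ih =>
      show ql c d m (t + 1) = (dl c 0 m (t + 1)).foldl (qlStep c d m (t + 1)) _
      rw [ql, ih]
  have h := Primrec.nat_rec' (f := fun x : (ℕ × ℕ) × ℕ => x.2)
    (g := fun _ => ([] : List ℕ)) snd (const []) hh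
  exact h.of_eq fun x => (heq x.1.1 x.1.2 x.2).symm

end Computability2

section Machines

open Primrec

lemma replicate_false_primrec : Primrec (fun n => List.replicate n false) := by
  have h : Primrec (fun n => (List.range n).map fun _ => false) :=
    Primrec.list_map Primrec.list_range ((const false).comp fst).to₂
  exact h.of_eq fun n => by
    induction n with
    | zero => rfl
    | succ n ih =>
      rw [List.range_succ, List.map_append, ih, List.replicate_succ']
      rfl

/-- the plain machine used for the counting argument -/
def Vm (c : Nat.Partrec.Code) : List Bool →. List Bool := fun p =>
  (Part.ofOption (parse p)).bind fun dr =>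
    (Nat.rfindOpt fun t => (ql c dr.1 (dr.2.length + dr.1) t)[(unpad dr.2)]?).map
      fun n => List.replicate n false

lemma Vm_partrec (c : Nat.Partrec.Code) : Partrec (Vm c) := by
  apply Partrec.bind (Computable.ofOption parse_primrec.to_comp)
  have hF : Computable₂ fun (a : List Bool × (ℕ × List Bool)) (t : ℕ) =>
      (ql c a.2.1 (a.2.2.length + a.2.1) t)[(unpad a.2.2)]? := by
    apply Primrec.to_comp
    have hql : Primrec fun w : (List Bool × (ℕ × List Bool)) × ℕ =>
        ql c w.1.2.1 (w.1.2.2.length + w.1.2.1) w.2 :=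
      (ql_primrec c).comp
        (Primrec.pair (Primrec.pair (fst.comp (snd.comp fst))
          (nat_add.comp (Primrec.list_length.comp (snd.comp (snd.comp fst)))
            (fst.comp (snd.comp fst)))) snd)
    exact (Primrec.list_getElem?.comp hql (unpad_primrec.comp (snd.comp (snd.comp fst)))).to₂
  have hmap := (Partrec.rfindOpt hF).map
    ((replicate_false_primrec.comp snd).to_comp.to₂)
  exact hmap

lemma Vm_mem_intro {c : Nat.Partrec.Code} {d : ℕ} {r p : List Bool}
    (hp : parse p = some (d, r)) {n T : ℕ}
    (hget : (ql c d (r.length + d) T)[(unpad r)]? = some n) :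
    List.replicate n false ∈ Vm c p := by
  rw [Vm]
  apply Part.mem_bind_iff.mpr
  refine ⟨(d, r), by simp [hp], ?_⟩
  refine (Part.mem_map_iff _).mpr ⟨n, ?_, rfl⟩
  have hmono : ∀ {v : ℕ} {t t' : ℕ}, t ≤ t' →
      v ∈ (ql c d (r.length + d) t)[(unpad r)]? →
      v ∈ (ql c d (r.length + d) t')[(unpad r)]? := by
    intro v t t' htt hv
    exact get?_of_prefix (ql_prefix c d (r.length + d) htt) hv
  exact (Nat.rfindOpt_mono hmono).mpr ⟨T, hget⟩

/-- checked parse for the conditional machine -/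
def mparse (a : ℕ) (p : List Bool) : Option (ℕ × List Bool) :=
  (parse p).bind fun er => if er.2.length = dFun a er.1 + 1 then some er else none

lemma dFun_primrec (a : ℕ) : Primrec (dFun a) := by
  have h : Primrec fun e : ℕ => e + 2 * Nat.size e + 10 * a + 40 :=
    nat_add.comp
      (nat_add.comp
        (nat_add.comp .id (nat_mul.comp (const 2) size_primrec))
        (const (10 * a)))
      (const 40)
  exact h.of_eq fun e => rfl

lemma mparse_primrec (a : ℕ) : Primrec (mparse a) := by
  have hcond : PrimrecPred fun w : List Bool × (ℕ × List Bool) =>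
      w.2.2.length = dFun a w.2.1 + 1 :=
    PrimrecRel.comp Primrec.eq (Primrec.list_length.comp (snd.comp snd))
      (Primrec.succ.comp ((dFun_primrec a).comp (fst.comp snd)))
  have hg : Primrec fun w : List Bool × (ℕ × List Bool) =>
      if w.2.2.length = dFun a w.2.1 + 1 then some w.2 else none := by
    have h := Primrec.ite hcond (Primrec.option_some.comp snd) (const none)
    exact h.of_eq fun w => by
      by_cases hc : w.2.2.length = dFun a w.2.1 + 1
      · rw [if_pos hc]
      · rw [if_neg hc]
  exact (Primrec.option_bind parse_primrec hg.to₂).of_eq fun p => rfl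

lemma mparse_eq_some {a : ℕ} {p : List Bool} {er : ℕ × List Bool}
    (h : mparse a p = some er) :
    parse p = some er ∧ er.2.length = dFun a er.1 + 1 := by
  rw [mparse] at h
  rcases hp : parse p with _ | er'
  · rw [hp] at h; simp at h
  · rw [hp] at h
    change (if er'.2.length = dFun a er'.1 + 1 then some er' else none) = some er at h
    split at h
    · rename_i hc
      have heq := Option.some.inj h
      subst heq
      exact ⟨rfl, hc⟩
    · simp at h

lemma mparse_enc (a e : ℕ) (r : List Bool) (hr : r.length = dFun a e + 1) :
    mparse a (enc e ++ r) = some (e, r) := by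
  rw [mparse, parse_enc]
  simp [hr]

/-- the conditional prefix-free machine -/
def MachF (c : Nat.Partrec.Code) (a : ℕ) : List Bool → ℕ →. List Bool := fun p y =>
  (Part.ofOption (mparse a p)).bind fun er =>
    Nat.rfindOpt fun t =>
      (dl c (y.unpair.1 + 1) (y.unpair.2 + er.1) t)[(unpad er.2)]?

lemma MachF_partrec (c : Nat.Partrec.Code) (a : ℕ) : Partrec₂ (MachF c a) := by
  apply Partrec.bind
    (Computable.ofOption ((mparse_primrec a).comp fst).to_comp)
  have hF : Computable₂ fun (w : (List Bool × ℕ) × (ℕ × List Bool)) (t : ℕ) =>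
      (dl c (w.1.2.unpair.1 + 1) (w.1.2.unpair.2 + w.2.1) t)[(unpad w.2.2)]? := by
    apply Primrec.to_comp
    have hy : Primrec fun w : ((List Bool × ℕ) × (ℕ × List Bool)) × ℕ => w.1.1.2 :=
      snd.comp (fst.comp fst)
    have hdl : Primrec fun w : ((List Bool × ℕ) × (ℕ × List Bool)) × ℕ =>
        dl c (w.1.1.2.unpair.1 + 1) (w.1.1.2.unpair.2 + w.1.2.1) w.2 :=
      (dl_primrec c).comp
        (Primrec.pair
          (Primrec.pair
            (Primrec.succ.comp (fst.comp (Primrec.unpair.comp hy)))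
            (nat_add.comp (snd.comp (Primrec.unpair.comp hy))
              (fst.comp (snd.comp (fst)))))
          snd)
    exact (Primrec.list_getElem?.comp hdl
      (unpad_primrec.comp (snd.comp (snd.comp fst)))).to₂
  exact Partrec.rfindOpt hF

lemma MachF_mem_intro {c : Nat.Partrec.Code} {a : ℕ} {e : ℕ} {r p : List Bool}
    (hp : mparse a p = some (e, r)) {y T : ℕ} {x : List Bool}
    (hget : (dl c (y.unpair.1 + 1) (y.unpair.2 + e) T)[(unpad r)]? = some x) :
    x ∈ MachF c a p y := by
  rw [MachF]
  apply Part.mem_bind_iff.mpr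
  refine ⟨(e, r), by simp [hp], ?_⟩
  have hmono : ∀ {v : List Bool} {t t' : ℕ}, t ≤ t' →
      v ∈ (dl c (y.unpair.1 + 1) (y.unpair.2 + e) t)[(unpad r)]? →
      v ∈ (dl c (y.unpair.1 + 1) (y.unpair.2 + e) t')[(unpad r)]? := by
    intro v t t' htt hv
    exact get?_of_prefix (dl_prefix c _ _ htt) hv
  exact (Nat.rfindOpt_mono hmono).mpr ⟨T, hget⟩

lemma MachF_dom {c : Nat.Partrec.Code} {a : ℕ} {p : List Bool} {y : ℕ}
    (h : (MachF c a p y).Dom) :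
    ∃ e r, parse p = some (e, r) ∧ r.length = dFun a e + 1 := by
  obtain ⟨x, hx⟩ := Part.dom_iff_mem.mp h
  rw [MachF] at hx
  obtain ⟨er, her, -⟩ := Part.mem_bind_iff.mp hx
  have hmp : mparse a p = some er := by
    rw [Part.mem_ofOption, Option.mem_def] at her
    exact her
  obtain ⟨h1, h2⟩ := mparse_eq_some hmp
  exact ⟨er.1, er.2, h1, h2⟩

/-- prefix-freeness of the conditional machine -/
lemma MachF_prefix_free (c : Nat.Partrec.Code) (a : ℕ) :
    ∀ (y : ℕ) (p q : List Bool),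
      (MachF c a p y).Dom → (MachF c a q y).Dom → p <+: q → p = q := by
  intro y p q hp hq hpre
  obtain ⟨e, r, hp1, hp2⟩ := MachF_dom hp
  obtain ⟨e', r', hq1, hq2⟩ := MachF_dom hq
  exact parse_prefix_free hp1 hq1 hpre fun hee => by rw [hp2, hq2, hee]

end Machines

section Main

open Nat.Partrec.Code

lemma get?_indexOf {α : Type*} [DecidableEq α] {l : List α} {a : α} (h : a ∈ l) :
    l[(l.idxOf a)]? = some a := by
  exact List.getElem?_idxOf h

/-- graph characterization of a partial recursive machine via stages -/
lemma exists_code_graph {U : List Bool →. List Bool} (hU₁ : Partrec U) :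
    ∃ c : Nat.Partrec.Code, ∀ (q x : List Bool), x ∈ U q ↔ ∃ t, (q, x) ∈ stageList c t := by
  obtain ⟨c, hc⟩ := exists_code.mp hU₁
  refine ⟨c, fun q x => ⟨fun hx => ?_, fun ⟨t, ht⟩ => ?_⟩⟩
  · have hx' : Encodable.encode x ∈ eval c (Encodable.encode q) := by
      rw [hc]
      simp only [Encodable.encodek, Part.coe_some, Part.bind_some]
      exact Part.mem_map Encodable.encode hx
    obtain ⟨k, hk⟩ := evaln_complete.mp hx'
    set t := max k (Encodable.encode q + 1) with htdef
    have hk' : Encodable.encode x ∈ evaln t c (Encodable.encode q) :=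
      evaln_mono (le_max_left _ _) hk
    refine ⟨t, ?_⟩
    rw [stageList, List.mem_filterMap]
    refine ⟨Encodable.encode q, List.mem_range.mpr (by omega), ?_⟩
    rw [Option.mem_def.mp hk']
    simp [Encodable.encodek]
  · rw [stageList, List.mem_filterMap] at ht
    obtain ⟨j, -, hj⟩ := ht
    rw [Option.bind_eq_some_iff] at hj
    obtain ⟨v, hev, hj⟩ := hj
    rw [Option.bind_eq_some_iff] at hj
    obtain ⟨q0, hdj, hj⟩ := hj
    rw [Option.map_eq_some_iff] at hj
    obtain ⟨x0, hdv, hqx⟩ := hj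
    have hq0q : q0 = q := congrArg Prod.fst hqx
    have hx0x : x0 = x := congrArg Prod.snd hqx
    subst hq0q hx0x
    have hv : v ∈ eval c j := evaln_sound (Option.mem_def.mpr hev)
    rw [hc] at hv
    simp only [hdj, Part.coe_some, Part.bind_some] at hv
    obtain ⟨x', hx', hvx⟩ := (Part.mem_map_iff _).mp hv
    have hdec : Encodable.decode (α := List Bool) v = some x' := by
      rw [← hvx]; exact Encodable.encodek x'
    rw [hdv] at hdec
    rwa [← Option.some.inj hdec] at hx'

variable {U : List Bool →. List Bool} {c : Nat.Partrec.Code}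

lemma dl_sound_U (hgraph : ∀ (q x : List Bool), x ∈ U q ↔ ∃ t, (q, x) ∈ stageList c t)
    {no m t : ℕ} {x} (hx : x ∈ dl c no m t) :
    (no = 0 ∨ x.length + 1 = no) ∧ ∃ q, q.length ≤ m ∧ x ∈ U q := by
  obtain ⟨q, hst, h1, h2⟩ := dl_sound hx
  exact ⟨h1, q, h2, (hgraph q x).mpr ⟨t, hst⟩⟩

lemma dl_len_bound (hgraph : ∀ (q x : List Bool), x ∈ U q ↔ ∃ t, (q, x) ∈ stageList c t)
    (no m t : ℕ) : (dl c no m t).length < 2 ^ (m + 1) := by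
  classical
  set φ : List Bool → List Bool := fun x =>
    if h : ∃ q, q.length ≤ m ∧ x ∈ U q then h.choose else [] with hφ
  apply nodup_bound_of_desc (dl_nodup c no m t) φ
  · intro x hx
    have h := (dl_sound_U hgraph hx).2
    rw [hφ]
    simp only [dif_pos h]
    exact h.choose_spec.1
  · intro x hx y hy hxy
    have h1 := (dl_sound_U hgraph hx).2
    have h2 := (dl_sound_U hgraph hy).2
    rw [hφ] at hxy
    simp only [dif_pos h1, dif_pos h2] at hxy
    have hx' : x ∈ U h1.choose := h1.choose_spec.2
    have hy' : y ∈ U h2.choose := h2.choose_spec.2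
    rw [hxy] at hx'
    exact Part.mem_unique hx' hy'

lemma sub_countP {L L₂ : List (List Bool)} (hN : L.Nodup) {p : List Bool → Bool}
    (h : ∀ z ∈ L, z ∈ L₂ ∧ p z) : L.length ≤ L₂.countP p := by
  classical
  have hsub : L.toFinset ⊆ (L₂.filter p).toFinset := by
    intro z hz
    rw [List.mem_toFinset] at hz ⊢
    rw [List.mem_filter]
    exact ⟨(h z hz).1, (h z hz).2⟩
  have h1 := Finset.card_le_card hsub
  rw [List.toFinset_card_of_nodup hN] at h1
  calc L.length ≤ (L₂.filter p).toFinset.card := h1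
    _ ≤ (L₂.filter p).length := List.toFinset_card_le _
    _ = L₂.countP p := List.countP_eq_length_filter.symm

/-- the key counting bound -/
lemma main_count (hgraph : ∀ (q x : List Bool), x ∈ U q ↔ ∃ t, (q, x) ∈ stageList c t)
    {cV : ℕ} (hcV : ∀ p x, x ∈ Vm c p → ∃ q : List Bool, q.length ≤ p.length + cV ∧ x ∈ U q)
    (n e t : ℕ) : (dl c (n + 1) (cpxN U n + e) t).length < 2 ^ (dFun cV e + 1) := by
  set k := cpxN U n with hk
  set d := dFun cV e with hd
  set m := k + e with hm
  rcases Nat.lt_or_ge m d with hmd | hmd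
  · exact lt_of_lt_of_le (dl_len_bound hgraph _ _ _)
      (Nat.pow_le_pow_right (by norm_num) (by omega))
  · by_contra hbig
    push_neg at hbig
    set j := m - d with hj
    set L := (dl c (n + 1) m t).take (2 ^ (d + 1)) with hL
    have hLlen : L.length = 2 ^ (d + 1) := by
      rw [hL, List.length_take]
      omega
    have hLnodup : L.Nodup := (dl_nodup c (n + 1) m t).sublist (List.take_sublist _ _)
    have hLmem : ∀ z ∈ L, z ∈ dl c (n + 1) m t :=
      fun z hz => (List.take_subset _ _) hz
    set T := t + 1 with hT
    have hLdl0 : ∀ z ∈ L, z ∈ dl c 0 m T := by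
      intro z hz
      obtain ⟨q, hst, -, hqm⟩ := dl_sound (hLmem z hz)
      exact dl_complete (stageList_mono (Nat.le_succ t) hst) (Or.inl rfl) hqm
    have hLn : ∀ z ∈ L, z.length = n := by
      intro z hz
      obtain ⟨q, -, hor, -⟩ := dl_sound (hLmem z hz)
      rcases hor with h | h
      · exact absurd h (by omega)
      · omega
    have hcnt : 2 ^ (d + 1) ≤ cnt c m T n := by
      rw [cnt, ← hLlen]
      apply sub_countP hLnodup
      intro z hz
      refine ⟨hLdl0 z hz, by simp [hLn z hz]⟩
    have hLne : L ≠ [] := by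
      intro h
      rw [h] at hLlen
      simp only [List.length_nil] at hLlen
      have hpos : 0 < 2 ^ (d + 1) := Nat.pow_pos (by norm_num)
      omega
    obtain ⟨z0, hz0⟩ := List.exists_mem_of_ne_nil L hLne
    have hz0n : z0.length = n := hLn z0 hz0
    have hnql : n ∈ ql c d m T := by
      rw [← hz0n]
      exact ql_complete (hLdl0 z0 hz0) (by rw [hz0n]; exact hcnt)
    obtain ⟨i, hgeti⟩ := List.mem_iff_getElem?.mp hnql
    have hilt : i < (ql c d m T).length := by
      by_contra hge
      rw [List.getElem?_eq_none_iff.mpr (by omega)] at hgeti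
      exact absurd hgeti (by simp)
    have hqllen : (ql c d m T).length < 2 ^ j := by
      have h1 := ql_length_bound c d m T
      have h2 := dl_len_bound hgraph 0 m T
      have h3 : 2 ^ (m + 1) = 2 ^ j * 2 ^ (d + 1) := by
        rw [show m + 1 = j + (d + 1) from by omega, pow_add]
      have h4 : (ql c d m T).length * 2 ^ (d + 1) < 2 ^ j * 2 ^ (d + 1) := by omega
      exact Nat.lt_of_mul_lt_mul_right h4
    have hibound : i < 2 ^ j := lt_trans hilt hqllen
    set p := enc d ++ pad i j with hp
    have hparse : parse p = some (d, pad i j) := parse_enc d (pad i j)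
    have hVm : List.replicate n false ∈ Vm c p := by
      apply Vm_mem_intro hparse
      rw [unpad_pad hibound, pad_length]
      rw [show j + d = m by omega]
      exact hgeti
    obtain ⟨q, hqlen, hq⟩ := hcV p (List.replicate n false) hVm
    have hkle : k ≤ p.length + cV := by
      have h5 : cpx U (numStr n) ≤ q.length := Nat.sInf_le ⟨q, rfl, hq⟩
      have h6 : cpxN U n = cpx U (numStr n) := rfl
      omega
    have hplen : p.length = (2 * Nat.size d + 1) + j := by
      rw [hp, List.length_append, enc_length, pad_length]
    have hdge := dFun_ge cV e
    rw [← hd] at hdge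
    omega

end Main

end KCD

/-- there is a constant `c` such that
`K(x ∣ n, C(n)) ≤ 2·(C(x) - C(n)) + c` for every `n` and every string `x`
of length `n`. -/
theorem conditional_K_le_C_deficiency
    (U : BStr →. BStr) (hU : UniversalPlain U)
    (hlenC : ∀ x : BStr, cpxN U x.length ≤ cpx U x)
    (UKc : BStr → ℕ →. BStr) (hUKc : UniversalPrefixFreeCond UKc) :
    ∃ c : ℤ, ∀ (n : ℕ) (x : BStr), x.length = n →
      (cpxCond UKc x (Nat.pair n (cpxN U n)) : ℤ) ≤
        2 * ((cpx U x : ℤ) - (cpxN U n : ℤ)) + c := by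
  classical
  obtain ⟨cc, hgraph⟩ := KCD.exists_code_graph hU.1
  obtain ⟨cV, hcV⟩ := hU.2 (KCD.Vm cc) (KCD.Vm_partrec cc)
  obtain ⟨cM, hcM⟩ := hUKc.2.2 (KCD.MachF cc cV) (KCD.MachF_partrec cc cV)
      (KCD.MachF_prefix_free cc cV)
  refine ⟨(10 * cV + 70 + cM : ℕ), ?_⟩
  intro n x hxlen
  set k := cpxN U n with hk
  have hklex : k ≤ cpx U x := by rw [hk, ← hxlen]; exact hlenC x
  set e := cpx U x - k with he
  have hcpx : cpx U x = k + e := by omega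
  have hne : ∃ q : BStr, q.length = cpx U x ∧ x ∈ U q := by
    obtain ⟨c0, hc0⟩ := hU.2 (fun p => Part.some p) Partrec.some
    obtain ⟨q, hq1, hq2⟩ := hc0 x x (Part.mem_some x)
    have hne2 : {L | ∃ q : BStr, q.length = L ∧ x ∈ U q}.Nonempty :=
      ⟨q.length, q, rfl, hq2⟩
    exact Nat.sInf_mem hne2
  obtain ⟨q0, hq0len, hq0⟩ := hne
  obtain ⟨t₁, hst⟩ := (hgraph q0 x).mp hq0
  have hxT : x ∈ KCD.dl cc (n + 1) (k + e) (t₁ + 1) :=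
    KCD.dl_complete (KCD.stageList_mono (Nat.le_succ t₁) hst)
      (Or.inr (by rw [hxlen])) (by rw [hq0len, hcpx])
  set T := t₁ + 1 with hT
  set d := KCD.dFun cV e with hd
  obtain ⟨i, hgeti⟩ := List.mem_iff_getElem?.mp hxT
  have hilt : i < (KCD.dl cc (n + 1) (k + e) T).length := by
    by_contra hge
    rw [List.getElem?_eq_none_iff.mpr (by omega)] at hgeti
    exact absurd hgeti (by simp)
  have hibound : i < 2 ^ (d + 1) :=
    lt_trans hilt (KCD.main_count hgraph hcV n e T)
  set r := KCD.pad i (d + 1) with hr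
  have hmp : KCD.mparse cV (KCD.enc e ++ r) = some (e, r) :=
    KCD.mparse_enc cV e r (by rw [hr, KCD.pad_length])
  have hY1 : (Nat.pair n k).unpair.1 = n := by simp [Nat.unpair_pair]
  have hY2 : (Nat.pair n k).unpair.2 = k := by simp [Nat.unpair_pair]
  have hmem : x ∈ KCD.MachF cc cV (KCD.enc e ++ r) (Nat.pair n k) := by
    apply KCD.MachF_mem_intro hmp (T := T)
    rw [hY1, hY2, hr, KCD.unpad_pad hibound]
    exact hgeti
  obtain ⟨q, hqlen, hq⟩ := hcM (KCD.enc e ++ r) (Nat.pair n k) x hmem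
  have hcle : cpxCond UKc x (Nat.pair n k) ≤ q.length := Nat.sInf_le ⟨q, rfl, hq⟩
  have hlen2 : (KCD.enc e ++ r).length ≤ 2 * e + (10 * cV + 70) := by
    rw [List.length_append, KCD.enc_length, hr, KCD.pad_length, hd]
    exact KCD.dFun_budget cV e
  have hfinal : cpxCond UKc x (Nat.pair n k) ≤ 2 * e + (10 * cV + 70 + cM) := by omega
  have h2z : ((cpx U x : ℤ) - (k : ℤ)) = (e : ℤ) := by rw [hcpx]; push_cast; ring
  rw [h2z]
  exact_mod_cast hfinal
end
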